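/- arXiv:math/0701329 — 5 statements merged into one kernel-verified Lean document; each statement's English description precedes it below -/
import Mathlib

section
/- Let H₁ ⊆ H₂ ⊆ ⋯ be an increasing sequence of closed subspaces of a Hilbert space H whose union is dense in H. If (aₙ) is a sequence of bounded operators aₙ ∈ B(Hₙ) with supₙ ‖aₙ‖ < ∞ and such that aₙ equals the compression of aₙ₊₁ to Hₙ for all n, then there exists a unique bounded operator a ∈ B(H) whose compression to each Hₙ equals aₙ, and moreover ‖a‖ = supₙ ‖aₙ‖. -/
open ContinuousLinearMap Filter Topology
open scoped ComplexInnerProductSpace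

noncomputable section

/-- Given an increasing sequence of closed subspaces `p n` of a Hilbert space `H`
with dense union, and a uniformly bounded coherent sequence of operators `a n ∈ B(p n)`
(each `a n` is the compression of `a (n+1)` to `p n`), there is a unique operator
`b ∈ B(H)` compressing to `a n` on each `p n`, and `‖b‖ = ⨆ n, ‖a n‖`. -/
theorem coherent_sequence_limit
    (H : Type*) [NormedAddCommGroup H] [InnerProductSpace ℂ H] [CompleteSpace H]
    (p : ℕ → Submodule ℂ H) [∀ n, CompleteSpace (p n)]
    (hmono : Monotone p)
    (hdense : Dense (↑(⨆ n, p n) : Set H))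
    (a : ∀ n, (p n →L[ℂ] p n))
    (hbdd : ∃ c : ℝ, ∀ n, ‖a n‖ ≤ c)
    (hcoh : ∀ n, Submodule.orthogonalProjectionOnto (p n) ∘L
        ((p (n + 1)).subtypeL ∘L a (n + 1) ∘L Submodule.orthogonalProjectionOnto (p (n + 1))) ∘L
        (p n).subtypeL = a n) :
    ∃ b : H →L[ℂ] H,
      (∀ n, Submodule.orthogonalProjectionOnto (p n) ∘L b ∘L (p n).subtypeL = a n) ∧
      ‖b‖ = ⨆ n, ‖a n‖ ∧
      ∀ b' : H →L[ℂ] H,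
        (∀ n, Submodule.orthogonalProjectionOnto (p n) ∘L b' ∘L (p n).subtypeL = a n) → b' = b := by
  classical
  obtain ⟨c, hc⟩ := hbdd
  have hc0 : 0 ≤ c := le_trans (norm_nonneg (a 0)) (hc 0)
  set bn : ℕ → H →L[ℂ] H :=
    fun n => (p n).subtypeL ∘L a n ∘L Submodule.orthogonalProjectionOnto (p n) with hbn_def
  have hbn_apply : ∀ n (x : H),
      bn n x = ((a n (Submodule.orthogonalProjectionOnto (p n) x) : p n) : H) := fun n x => rfl
  have hbn_mem : ∀ n (x : H), bn n x ∈ p n :=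
    fun n x => (a n (Submodule.orthogonalProjectionOnto (p n) x)).2
  have hproj_le : ∀ n (x : H), ‖((Submodule.orthogonalProjectionOnto (p n) x : p n) : H)‖ ≤ ‖x‖ := by
    intro n x
    calc ‖((Submodule.orthogonalProjectionOnto (p n) x : p n) : H)‖
        = ‖Submodule.orthogonalProjectionOnto (p n) x‖ := rfl
      _ ≤ ‖Submodule.orthogonalProjectionOnto (p n)‖ * ‖x‖ := (Submodule.orthogonalProjectionOnto (p n)).le_opNorm x
      _ ≤ 1 * ‖x‖ := by gcongr; exact Submodule.orthogonalProjectionOnto_norm_le _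
      _ = ‖x‖ := one_mul _
  have hbn_le : ∀ n (x : H), ‖bn n x‖ ≤ ‖a n‖ * ‖x‖ := by
    intro n x
    rw [hbn_apply]
    calc ‖((a n (Submodule.orthogonalProjectionOnto (p n) x) : p n) : H)‖
        = ‖a n (Submodule.orthogonalProjectionOnto (p n) x)‖ := rfl
      _ ≤ ‖a n‖ * ‖Submodule.orthogonalProjectionOnto (p n) x‖ := (a n).le_opNorm _
      _ ≤ ‖a n‖ * ‖x‖ := by
          gcongr
          exact hproj_le n x
  have hbn_lec : ∀ n (x : H), ‖bn n x‖ ≤ c * ‖x‖ := fun n x =>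
    (hbn_le n x).trans (by gcongr; exact hc n)
  -- projection of x in p n is x itself, as an element of p n
  have hproj_self : ∀ n (x : H) (hx : x ∈ p n),
      Submodule.orthogonalProjectionOnto (p n) x = ⟨x, hx⟩ := by
    intro n x hx
    exact Subtype.ext (Submodule.starProjection_eq_self_iff.mpr hx)
  -- one-step coherence, in H
  have hstep : ∀ n (x : H), x ∈ p n →
      ((Submodule.orthogonalProjectionOnto (p n) (bn (n + 1) x) : p n) : H) = bn n x := by
    intro n x hx
    have := congrArg (fun v => ((v : p n) : H)) (DFunLike.congr_fun (hcoh n) ⟨x, hx⟩)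
    simp only [ContinuousLinearMap.comp_apply, Submodule.subtypeL_apply] at this
    rw [hbn_apply, hbn_apply, hproj_self n x hx]
    convert this using 3
  -- coherence for all m ≤ n
  have hkey : ∀ m n, m ≤ n → ∀ (x : H), x ∈ p m →
      ((Submodule.orthogonalProjectionOnto (p m) (bn n x) : p m) : H) = bn m x := by
    intro m n h
    induction n, h using Nat.le_induction with
    | base =>
        intro x hx
        exact Submodule.starProjection_eq_self_iff.mpr (hbn_mem m x)
    | succ n hmn ih =>
        intro x hx
        have hx' : x ∈ p n := hmono hmn hx
        have h1 : Submodule.orthogonalProjectionOnto (p m) ((Submodule.orthogonalProjectionOnto (p n) (bn (n + 1) x) : p n) : H)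
            = Submodule.orthogonalProjectionOnto (p m) (bn (n + 1) x) :=
          Submodule.orthogonalProjectionOnto_starProjection_of_le (hmono hmn) (bn (n + 1) x)
        calc ((Submodule.orthogonalProjectionOnto (p m) (bn (n + 1) x) : p m) : H)
            = ((Submodule.orthogonalProjectionOnto (p m)
                ((Submodule.orthogonalProjectionOnto (p n) (bn (n + 1) x) : p n) : H) : p m) : H) := by
              rw [h1]
          _ = ((Submodule.orthogonalProjectionOnto (p m) (bn n x) : p m) : H) := by rw [hstep n x hx']
          _ = bn m x := ih x hx
  -- Pythagoras / martingale property
  have hpyth : ∀ m n N, m ≤ n → n ≤ N → ∀ (x : H), x ∈ p m →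
      ‖bn N x‖ ^ 2 = ‖bn n x‖ ^ 2 + ‖bn N x - bn n x‖ ^ 2 := by
    intro m n N hmn hnN x hx
    have hx' : x ∈ p n := hmono hmn hx
    have h1 : ((Submodule.orthogonalProjectionOnto (p n) (bn N x) : p n) : H) = bn n x :=
      hkey n N hnN x hx'
    have horth : bn N x - bn n x ∈ (p n)ᗮ := by
      rw [← h1]; exact Submodule.sub_starProjection_mem_orthogonal _
    have hinner : ⟪bn n x, bn N x - bn n x⟫ = 0 :=
      Submodule.inner_right_of_mem_orthogonal (hbn_mem n x) horth
    have := norm_add_sq_eq_norm_sq_add_norm_sq_of_inner_eq_zero _ _ hinner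
    rw [add_sub_cancel] at this
    linarith [this]
  -- convergence on the union
  have hconv_mem : ∀ m (x : H), x ∈ p m →
      ∃ y, Tendsto (fun n => bn n x) atTop (𝓝 y) := by
    intro m x hx
    set s : ℕ → ℝ := fun k => ‖bn (k + m) x‖ ^ 2 with hs_def
    have hs_mono : Monotone s := by
      intro k l hkl
      have := hpyth m (k + m) (l + m) (Nat.le_add_left m k) (by omega) x hx
      have h2 : (0:ℝ) ≤ ‖bn (l + m) x - bn (k + m) x‖ ^ 2 := sq_nonneg _
      simp only [hs_def]; linarith
    have hs_bdd : BddAbove (Set.range s) := by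
      refine ⟨(c * ‖x‖) ^ 2, ?_⟩
      rintro _ ⟨k, rfl⟩
      have := hbn_lec (k + m) x
      have h0 : (0:ℝ) ≤ ‖bn (k + m) x‖ := norm_nonneg _
      simp only [hs_def]
      nlinarith
    have hs_conv : Tendsto s atTop (𝓝 (⨆ k, s k)) := tendsto_atTop_ciSup hs_mono hs_bdd
    have hs_cauchy : CauchySeq s := hs_conv.cauchySeq
    have hcauchy : CauchySeq (fun k => bn (k + m) x) := by
      rw [Metric.cauchySeq_iff]
      intro ε hε
      obtain ⟨N, hN⟩ := Metric.cauchySeq_iff.mp hs_cauchy (ε ^ 2) (by positivity)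
      refine ⟨N, fun k hk l hl => ?_⟩
      have key : ∀ i j, N ≤ i → N ≤ j → j ≤ i → dist (bn (i + m) x) (bn (j + m) x) < ε := by
        intro i j hi hj hji
        have hd := hN i hi j hj
        have hp := hpyth m (j + m) (i + m) (Nat.le_add_left m j) (by omega) x hx
        rw [Real.dist_eq] at hd
        have h1 : ‖bn (i + m) x - bn (j + m) x‖ ^ 2 < ε ^ 2 := by
          have : s i - s j = ‖bn (i + m) x - bn (j + m) x‖ ^ 2 := by
            simp only [hs_def]; linarith
          rw [← this]
          calc s i - s j ≤ |s i - s j| := le_abs_self _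
            _ < ε ^ 2 := hd
        rw [dist_eq_norm]
        nlinarith [norm_nonneg (bn (i + m) x - bn (j + m) x)]
      rcases le_total l k with h | h
      · exact key k l hk hl h
      · rw [dist_comm]; exact key l k hl hk h
    obtain ⟨y, hy⟩ := cauchySeq_tendsto_of_complete hcauchy
    exact ⟨y, (tendsto_add_atTop_iff_nat m).mp hy⟩
  -- membership in the union
  have hmem_union : ∀ (x : H), x ∈ (⨆ n, p n : Submodule ℂ H) → ∃ m, x ∈ p m := by
    intro x hx
    exact (Submodule.mem_iSup_of_directed p hmono.directed_le).mp hx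
  -- convergence everywhere
  have hcauchy_all : ∀ x : H, ∃ y, Tendsto (fun n => bn n x) atTop (𝓝 y) := by
    intro x
    have hC : CauchySeq (fun n => bn n x) := by
      rw [Metric.cauchySeq_iff]
      intro ε hε
      have hδ : (0:ℝ) < ε / (4 * (c + 1)) := by positivity
      obtain ⟨v, hv_mem, hv_dist⟩ : ∃ v ∈ (↑(⨆ n, p n) : Set H), dist x v < ε / (4 * (c + 1)) := by
        have := Metric.dense_iff.mp hdense x (ε / (4 * (c + 1))) hδ
        obtain ⟨v, hv1, hv2⟩ := this
        refine ⟨v, hv2, ?_⟩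
        rw [dist_comm]
        exact Metric.mem_ball.mp hv1
      obtain ⟨m, hm⟩ := hmem_union v hv_mem
      obtain ⟨y, hy⟩ := hconv_mem m v hm
      have hyC : CauchySeq (fun n => bn n v) := hy.cauchySeq
      obtain ⟨N, hN⟩ := Metric.cauchySeq_iff.mp hyC (ε / 2) (by positivity)
      refine ⟨N, fun k hk l hl => ?_⟩
      have hxv : ‖x - v‖ < ε / (4 * (c + 1)) := by rwa [dist_eq_norm] at hv_dist
      have hb1 : ‖bn k x - bn k v‖ ≤ c * ‖x - v‖ := by
        rw [← map_sub]; exact hbn_lec k (x - v)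
      have hb2 : ‖bn l x - bn l v‖ ≤ c * ‖x - v‖ := by
        rw [← map_sub]; exact hbn_lec l (x - v)
      have hmid : dist (bn k v) (bn l v) < ε / 2 := hN k hk l hl
      have hcv : c * ‖x - v‖ ≤ ε / 4 := by
        have h1 : c * ‖x - v‖ ≤ c * (ε / (4 * (c + 1))) :=
          mul_le_mul_of_nonneg_left hxv.le hc0
        have h2 : c * (ε / (4 * (c + 1))) ≤ ε / 4 := by
          have h4 : (0:ℝ) < 4 * (c + 1) := by positivity
          rw [mul_div_assoc', div_le_div_iff₀ h4 (by norm_num)]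
          nlinarith
        linarith
      calc dist (bn k x) (bn l x)
          ≤ dist (bn k x) (bn k v) + dist (bn k v) (bn l v) + dist (bn l v) (bn l x) :=
            dist_triangle4 _ _ _ _
        _ < ε / 4 + ε / 2 + ε / 4 := by
            simp only [dist_eq_norm]
            rw [norm_sub_rev (bn l v)]
            have hm2 : ‖bn k v - bn l v‖ < ε / 2 := by rwa [dist_eq_norm] at hmid
            linarith [hb1.trans hcv, hb2.trans hcv]
        _ = ε := by ring
    exact cauchySeq_tendsto_of_complete hC
  choose bf hbf using hcauchy_all
  -- bf is linear and bounded
  have hadd : ∀ x y : H, bf (x + y) = bf x + bf y := by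
    intro x y
    refine tendsto_nhds_unique (hbf (x + y)) ?_
    exact ((hbf x).add (hbf y)).congr fun n => (map_add (bn n) x y).symm
  have hsmul : ∀ (r : ℂ) (x : H), bf (r • x) = r • bf x := by
    intro r x
    refine tendsto_nhds_unique (hbf (r • x)) ?_
    exact (((hbf x).const_smul r)).congr fun n => (map_smul (bn n) r x).symm
  have hbound : ∀ x : H, ‖bf x‖ ≤ c * ‖x‖ := by
    intro x
    exact le_of_tendsto (hbf x).norm (Filter.Eventually.of_forall fun n => hbn_lec n x)
  set blin : H →ₗ[ℂ] H :=
    { toFun := bf, map_add' := hadd, map_smul' := hsmul } with hblin_def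
  set b : H →L[ℂ] H := blin.mkContinuous c (fun x => hbound x) with hb_def
  have hb_apply : ∀ x, b x = bf x := fun x => rfl
  -- compression property
  have hcompH : ∀ n (x : H), x ∈ p n →
      ((Submodule.orthogonalProjectionOnto (p n) (b x) : p n) : H) = bn n x := by
    intro n x hx
    have t1 : Tendsto (fun k => bn k x) atTop (𝓝 (b x)) := hbf x
    have t2 : Tendsto (fun k => ((Submodule.orthogonalProjectionOnto (p n) (bn k x) : p n) : H)) atTop
        (𝓝 ((Submodule.orthogonalProjectionOnto (p n) (b x) : p n) : H)) := by
      have hcont : Continuous fun u : H => ((Submodule.orthogonalProjectionOnto (p n) u : p n) : H) :=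
        ((p n).subtypeL ∘L Submodule.orthogonalProjectionOnto (p n)).continuous
      exact (hcont.tendsto (b x)).comp t1
    have t3 : Tendsto (fun k => ((Submodule.orthogonalProjectionOnto (p n) (bn k x) : p n) : H)) atTop
        (𝓝 (bn n x)) := by
      refine tendsto_const_nhds.congr' ?_
      filter_upwards [eventually_ge_atTop n] with k hk
      exact (hkey n k hk x hx).symm
    exact tendsto_nhds_unique t2 t3
  have hcomp : ∀ n, Submodule.orthogonalProjectionOnto (p n) ∘L b ∘L (p n).subtypeL = a n := by
    intro n
    ext x
    have h1 := hcompH n (x : H) x.2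
    simp only [ContinuousLinearMap.comp_apply, Submodule.subtypeL_apply]
    rw [h1, hbn_apply, hproj_self n (x : H) x.2]
  -- strong convergence of projections to identity
  have hP : ∀ u : H, Tendsto (fun n => ((Submodule.orthogonalProjectionOnto (p n) u : p n) : H)) atTop (𝓝 u) := by
    intro u
    rw [Metric.tendsto_atTop]
    intro ε hε
    obtain ⟨v, hv_mem, hv_dist⟩ : ∃ v ∈ (↑(⨆ n, p n) : Set H), dist u v < ε / 3 := by
      have := Metric.dense_iff.mp hdense u (ε / 3) (by positivity)
      obtain ⟨v, hv1, hv2⟩ := this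
      refine ⟨v, hv2, ?_⟩
      rw [dist_comm]
      exact Metric.mem_ball.mp hv1
    obtain ⟨m, hm⟩ := hmem_union v hv_mem
    refine ⟨m, fun n hn => ?_⟩
    have hv_n : v ∈ p n := hmono hn hm
    have h1 : ((Submodule.orthogonalProjectionOnto (p n) v : p n) : H) = v :=
      Submodule.starProjection_eq_self_iff.mpr hv_n
    have h2 : ‖((Submodule.orthogonalProjectionOnto (p n) (u - v) : p n) : H)‖ ≤ ‖u - v‖ := hproj_le n _
    calc dist ((Submodule.orthogonalProjectionOnto (p n) u : p n) : H) u
        ≤ dist ((Submodule.orthogonalProjectionOnto (p n) u : p n) : H) v + dist v u := dist_triangle _ _ _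
      _ = ‖((Submodule.orthogonalProjectionOnto (p n) (u - v) : p n) : H)‖ + dist v u := by
          rw [dist_eq_norm, map_sub]
          congr 2
          push_cast
          rw [h1]
      _ ≤ ‖u - v‖ + dist v u := by gcongr
      _ < ε / 3 + ε / 3 := by
          rw [dist_comm v u] at *
          rw [← dist_eq_norm]
          exact add_lt_add hv_dist hv_dist
      _ < ε := by linarith
  -- norm computation
  have hbdd_above : BddAbove (Set.range fun n => ‖a n‖) := ⟨c, by rintro _ ⟨n, rfl⟩; exact hc n⟩
  have hsup_nonneg : 0 ≤ ⨆ n, ‖a n‖ :=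
    le_trans (norm_nonneg (a 0)) (le_ciSup hbdd_above 0)
  have hnorm_le : ‖b‖ ≤ ⨆ n, ‖a n‖ := by
    refine ContinuousLinearMap.opNorm_le_bound b hsup_nonneg fun x => ?_
    refine le_of_tendsto (hbf x).norm (Filter.Eventually.of_forall fun n => ?_)
    calc ‖bn n x‖ ≤ ‖a n‖ * ‖x‖ := hbn_le n x
      _ ≤ (⨆ k, ‖a k‖) * ‖x‖ := by gcongr; exact le_ciSup hbdd_above n
  have hnorm_ge : (⨆ n, ‖a n‖) ≤ ‖b‖ := by
    refine ciSup_le fun n => ?_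
    rw [← hcomp n]
    have hsub : ‖(p n).subtypeL‖ ≤ 1 := by
      refine ContinuousLinearMap.opNorm_le_bound _ zero_le_one fun x => ?_
      simp
    calc ‖Submodule.orthogonalProjectionOnto (p n) ∘L b ∘L (p n).subtypeL‖
        ≤ ‖Submodule.orthogonalProjectionOnto (p n)‖ * ‖b ∘L (p n).subtypeL‖ := opNorm_comp_le _ _
      _ ≤ 1 * ‖b ∘L (p n).subtypeL‖ :=
          mul_le_mul_of_nonneg_right (Submodule.orthogonalProjectionOnto_norm_le _) (ContinuousLinearMap.opNorm_nonneg _)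
      _ = ‖b ∘L (p n).subtypeL‖ := one_mul _
      _ ≤ ‖b‖ * ‖(p n).subtypeL‖ := opNorm_comp_le _ _
      _ ≤ ‖b‖ * 1 := mul_le_mul_of_nonneg_left hsub (ContinuousLinearMap.opNorm_nonneg _)
      _ = ‖b‖ := mul_one _
  refine ⟨b, hcomp, le_antisymm hnorm_le hnorm_ge, ?_⟩
  -- uniqueness
  intro b' h'
  have heq : Set.EqOn ⇑b' ⇑b (↑(⨆ n, p n) : Set H) := by
    intro x hx
    obtain ⟨m, hm⟩ := hmem_union x hx
    have t1 : Tendsto (fun n => ((Submodule.orthogonalProjectionOnto (p n) (b' x) : p n) : H)) atTop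
        (𝓝 (b' x)) := hP (b' x)
    have t2 : Tendsto (fun n => bn n x) atTop (𝓝 (b' x)) := by
      refine t1.congr' ?_
      filter_upwards [eventually_ge_atTop m] with n hn
      have hxn : x ∈ p n := hmono hn hm
      have := congrArg (fun v => ((v : p n) : H)) (DFunLike.congr_fun (h' n) ⟨x, hxn⟩)
      simp only [ContinuousLinearMap.comp_apply, Submodule.subtypeL_apply] at this
      rw [this, hbn_apply, hproj_self n x hxn]
    exact tendsto_nhds_unique t2 (hbf x)
  have hfun : ⇑b' = ⇑b := Continuous.ext_on hdense b'.continuous b.continuous heq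
  exact ContinuousLinearMap.ext fun x => congrFun hfun x
end
end

section
/- Let H be a closed subspace of a Hilbert space K with orthogonal projection P = P_H, and let ψ : A → B(K) be a unital completely positive map on a unital C*-algebra A. If the compressed map x ↦ P ψ(x) P (viewed as a map A → B(H)) is multiplicative (i.e., a *-homomorphism), then H is invariant under ψ(x) for every x ∈ A, i.e., (1 − P) ψ(x) P = 0 for all x ∈ A. -/
open ContinuousLinearMap

noncomputable section

/-- A matrix over a star-ring is "positive" if it factors as `Bᴴ * B`. -/
def MatPos {R : Type*} [NonUnitalSemiring R] [StarRing R] {n : ℕ}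
    (M : Matrix (Fin n) (Fin n) R) : Prop :=
  ∃ B : Matrix (Fin n) (Fin n) R, M = B.conjTranspose * B

/-- Complete positivity of a map defined on all of `A`. -/
def IsCPfull {A : Type*} [CStarAlgebra A]
    {H : Type*} [NormedAddCommGroup H] [InnerProductSpace ℂ H] [CompleteSpace H]
    (Φ : A → (H →L[ℂ] H)) : Prop :=
  ∀ (n : ℕ) (M : Matrix (Fin n) (Fin n) A), MatPos M → MatPos (M.map Φ)

open RCLike
local notation "⟪" x ", " y "⟫" => @inner ℂ _ _ x y

private lemma cs_aux (a b c d X : ℝ) (hX : X = c ^ 2 + d ^ 2)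
    (hcs : X ≤ a * c + b * d) : X ≤ a ^ 2 + b ^ 2 := by
  rcases eq_or_lt_of_le (show (0:ℝ) ≤ X by nlinarith [sq_nonneg c, sq_nonneg d]) with h | h
  · nlinarith [sq_nonneg a, sq_nonneg b]
  · have h1 : X ^ 2 ≤ (a * c + b * d) ^ 2 := by nlinarith
    have h2 : (a * c + b * d) ^ 2 ≤ (a ^ 2 + b ^ 2) * X := by
      nlinarith [sq_nonneg (a * d - b * c)]
    nlinarith

set_option maxHeartbeats 1000000 in
/-- If `ψ : A → B(K)` is a unital completely positive map and the compression
of `ψ` to a closed subspace `H = p ⊆ K` is multiplicative, then `p` is invariant under every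
`ψ(x)`, i.e. `(1 - P) ψ(x) P = 0`. -/
theorem invariant_of_multiplicative_compression
    (A : Type*) [CStarAlgebra A]
    (K : Type*) [NormedAddCommGroup K] [InnerProductSpace ℂ K] [CompleteSpace K]
    (ψ : A →ₗ[ℂ] (K →L[ℂ] K)) (hunital : ψ 1 = 1)
    (hcp : IsCPfull (ψ : A → (K →L[ℂ] K)))
    (p : Submodule ℂ K) [CompleteSpace p]
    (hmult : ∀ x y : A,
      p.orthogonalProjectionOnto ∘L ψ (x * y) ∘L p.subtypeL =
        (p.orthogonalProjectionOnto ∘L ψ x ∘L p.subtypeL) ∘L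
        (p.orthogonalProjectionOnto ∘L ψ y ∘L p.subtypeL)) :
    ∀ (x : A), ∀ ξ ∈ p, ψ x ξ ∈ p := by
  intro x ξ hξ
  set η := ψ x ξ with hη
  -- the positive 2×2 matrix [[1, x], [x*, x*x]]
  have hMpos : MatPos (Matrix.of ![![(1:A), x], ![star x, star x * x]]) := by
    refine ⟨Matrix.of ![![(1:A), x], ![0, 0]], ?_⟩
    ext i j
    fin_cases i <;> fin_cases j <;>
      simp [Matrix.mul_apply, Fin.sum_univ_two, Matrix.conjTranspose_apply]
  obtain ⟨C, hC⟩ := hcp 2 _ hMpos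
  have hent : ∀ i j : Fin 2, ψ ((Matrix.of ![![(1:A), x], ![star x, star x * x]]) i j) =
      star (C 0 i) * C 0 j + star (C 1 i) * C 1 j := by
    intro i j
    have := congrFun (congrFun hC i) j
    simpa [Matrix.map_apply, Matrix.mul_apply, Fin.sum_univ_two,
      Matrix.conjTranspose_apply] using this
  have h1 : (1 : K →L[ℂ] K) = star (C 0 0) * C 0 0 + star (C 1 0) * C 1 0 := by
    have := hent 0 0; rw [show (Matrix.of ![![(1:A), x], ![star x, star x * x]]) 0 0 = 1 from rfl,
      hunital] at this; exact this
  have hx : ψ x = star (C 0 0) * C 0 1 + star (C 1 0) * C 1 1 := by simpa using hent 0 1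
  have hxs : ψ (star x) = star (C 0 1) * C 0 0 + star (C 1 1) * C 1 0 := by simpa using hent 1 0
  have hxx : ψ (star x * x) = star (C 0 1) * C 0 1 + star (C 1 1) * C 1 1 := by simpa using hent 1 1
  set Pη : K := (p.orthogonalProjectionOnto η : K) with hPη
  -- key identity: ⟪ψ(x*x)ξ, ξ⟫ = ⟪Pη, η⟫
  have hm : p.orthogonalProjectionOnto (ψ (star x * x) ξ) =
      p.orthogonalProjectionOnto (ψ (star x) Pη) := by
    have := congrArg (fun T : p →L[ℂ] p => T ⟨ξ, hξ⟩) (hmult (star x) x)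
    simpa [Pη, hη] using this
  have key : ⟪ψ (star x * x) ξ, ξ⟫ = ⟪Pη, η⟫ := by
    have e1 : ⟪ψ (star x * x) ξ, ξ⟫ =
        ⟪(p.orthogonalProjectionOnto (ψ (star x * x) ξ) : p), (⟨ξ, hξ⟩ : p)⟫ := by
      rw [Submodule.inner_orthogonalProjectionOnto_eq_of_mem_right]
    rw [e1, hm, Submodule.inner_orthogonalProjectionOnto_eq_of_mem_right]
    have e2 : ⟪ψ (star x) Pη, ξ⟫ =
        ⟪C 0 0 Pη, C 0 1 ξ⟫ + ⟪C 1 0 Pη, C 1 1 ξ⟫ := by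
      rw [hxs]
      simp [mul_apply, star_eq_adjoint, inner_add_left, adjoint_inner_left]
    have e3 : ⟪Pη, η⟫ = ⟪C 0 0 Pη, C 0 1 ξ⟫ + ⟪C 1 0 Pη, C 1 1 ξ⟫ := by
      rw [hη, hx]
      simp [mul_apply, star_eq_adjoint, inner_add_right, adjoint_inner_right]
    rw [e2, ← e3]
  -- Schwarz: ‖η‖² ≤ re ⟪ψ(x*x)ξ, ξ⟫
  have hs : re ⟪ψ (star x * x) ξ, ξ⟫ = ‖C 0 1 ξ‖ ^ 2 + ‖C 1 1 ξ‖ ^ 2 := by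
    rw [hxx]
    simp only [add_apply, mul_apply_eq_comp, star_eq_adjoint, inner_add_left,
      adjoint_inner_left, map_add, inner_self_eq_norm_sq]
  have ht : ‖η‖ ^ 2 = ‖C 0 0 η‖ ^ 2 + ‖C 1 0 η‖ ^ 2 := by
    have : re ⟪(1 : K →L[ℂ] K) η, η⟫ = ‖C 0 0 η‖ ^ 2 + ‖C 1 0 η‖ ^ 2 := by
      rw [h1]
      simp only [add_apply, mul_apply_eq_comp, star_eq_adjoint, inner_add_left,
        adjoint_inner_left, map_add, inner_self_eq_norm_sq]
    exact (inner_self_eq_norm_sq (𝕜 := ℂ) η).symm.trans this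
  have hcs : ‖η‖ ^ 2 ≤ ‖C 0 1 ξ‖ * ‖C 0 0 η‖ + ‖C 1 1 ξ‖ * ‖C 1 0 η‖ := by
    have e4 : (‖η‖ : ℝ) ^ 2 = re (⟪C 0 1 ξ, C 0 0 η⟫ + ⟪C 1 1 ξ, C 1 0 η⟫) := by
      have : ⟪ψ x ξ, η⟫ = ⟪C 0 1 ξ, C 0 0 η⟫ + ⟪C 1 1 ξ, C 1 0 η⟫ := by
        rw [hx]
        simp [mul_apply, star_eq_adjoint, inner_add_left, adjoint_inner_left]
      rw [← this, ← hη, inner_self_eq_norm_sq]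
    rw [e4, map_add]
    exact add_le_add (re_inner_le_norm _ _) (re_inner_le_norm _ _)
  have hschwarz : ‖η‖ ^ 2 ≤ re ⟪ψ (star x * x) ξ, ξ⟫ := by
    rw [hs]
    exact cs_aux _ _ _ _ _ ht hcs
  -- conclude
  have horth : ⟪η - Pη, Pη⟫ = 0 := by
    have := Submodule.sub_starProjection_mem_orthogonal (K := p) η
    exact (Submodule.mem_orthogonal' p _).mp this Pη (Submodule.coe_mem _)
  have hdecomp : ‖η - Pη‖ ^ 2 = ‖η‖ ^ 2 - re ⟪Pη, η⟫ := by
    have h1 : ⟪η - Pη, η - Pη⟫ = ⟪η - Pη, η⟫ := by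
      rw [inner_sub_right, horth, sub_zero]
    have h2 : re ⟪η - Pη, η⟫ = ‖η‖ ^ 2 - re ⟪Pη, η⟫ := by
      rw [inner_sub_left, map_sub, inner_self_eq_norm_sq]
    calc ‖η - Pη‖ ^ 2 = re ⟪η - Pη, η - Pη⟫ := (inner_self_eq_norm_sq (𝕜 := ℂ) _).symm
      _ = re ⟪η - Pη, η⟫ := by rw [h1]
      _ = ‖η‖ ^ 2 - re ⟪Pη, η⟫ := h2
  have h5 : re ⟪ψ (star x * x) ξ, ξ⟫ = re ⟪Pη, η⟫ := by rw [key]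
  have hzero : ‖η - Pη‖ ^ 2 ≤ 0 := by linarith [hschwarz, hdecomp]
  have heq : η = Pη := by
    have h0 : ‖η - Pη‖ = 0 := by nlinarith [norm_nonneg (η - Pη)]
    have := norm_eq_zero.mp h0
    have := sub_eq_zero.mp this
    exact this
  rw [heq]
  exact Submodule.coe_mem _
end
end

section
/- Let X and Y be standard Borel spaces, f : X → Y a surjective Borel map, and μ a finite positive Borel measure on Y. Then there exists a Borel set N ⊆ Y with μ(N) = 0 and a Borel map g : Y \ N → X such that f(g(y)) = y for all y ∈ Y \ N. -/
open MeasureTheory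


open MeasureTheory Set Function Filter Topology ENNReal

namespace VNSel

variable {Y : Type*}

lemma measurable_sInf_mem {mY : MeasurableSpace Y} {B : ℕ → Set Y}
    (hB : ∀ n, MeasurableSet (B n)) :
    Measurable (fun y => sInf {n | y ∈ B n}) := by
  apply measurable_to_countable'
  intro k
  have hset : (fun y => sInf {n | y ∈ B n}) ⁻¹' {k}
      = (B k ∩ ⋂ m, ⋂ _ : m < k, (B m)ᶜ) ∪ (if k = 0 then ⋂ m, (B m)ᶜ else ∅) := by
    ext y
    simp only [mem_preimage, mem_singleton_iff, mem_union, mem_inter_iff, mem_iInter,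
      mem_compl_iff]
    constructor
    · intro hk
      by_cases hne : {n | y ∈ B n}.Nonempty
      · left
        constructor
        · have := Nat.sInf_mem hne
          rwa [hk] at this
        · intro m hm
          have : m < sInf {n | y ∈ B n} := by rwa [hk]
          exact Nat.notMem_of_lt_sInf this
      · right
        rw [not_nonempty_iff_eq_empty] at hne
        have hk0 : k = 0 := by rw [← hk, hne, Nat.sInf_empty]
        rw [if_pos hk0]
        simp only [mem_iInter, mem_compl_iff]
        intro m hm
        exact eq_empty_iff_forall_notMem.1 hne m hm
    · rintro (⟨hk, hlt⟩ | h)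
      · refine le_antisymm (Nat.sInf_le hk) (Nat.le_of_not_lt fun hc => ?_)
        have hmem : sInf {n | y ∈ B n} ∈ {n | y ∈ B n} := Nat.sInf_mem ⟨k, hk⟩
        exact hlt _ hc hmem
      · split_ifs at h with hk0
        · subst hk0
          simp only [mem_iInter, mem_compl_iff] at h
          have : {n | y ∈ B n} = ∅ := by ext n; simp [h n]
          rw [this, Nat.sInf_empty]
        · exact absurd h (notMem_empty y)
  rw [hset]
  refine MeasurableSet.union ((hB k).inter (MeasurableSet.iInter fun m =>
    MeasurableSet.iInter fun _ => (hB m).compl)) ?_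
  split_ifs
  · exact MeasurableSet.iInter fun m => (hB m).compl
  · exact MeasurableSet.empty

lemma measurable_comp_countable {mY : MeasurableSpace Y} {γ β : Type*} [MeasurableSpace β]
    [Countable γ] {c : Y → γ} (hc : ∀ s : γ, MeasurableSet {y | c y = s})
    {F : γ → Y → β} (hF : ∀ s, Measurable (F s)) :
    Measurable (fun y => F (c y) y) := by
  intro t ht
  have : (fun y => F (c y) y) ⁻¹' t = ⋃ s : γ, ({y | c y = s} ∩ F s ⁻¹' t) := by
    ext y
    simp only [mem_preimage, mem_iUnion, mem_inter_iff, mem_setOf_eq]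
    constructor
    · intro h; exact ⟨c y, rfl, h⟩
    · rintro ⟨s, rfl, h⟩; exact h
  rw [this]
  exact MeasurableSet.iUnion fun s => (hc s).inter (hF s ht)

end VNSel


namespace VNSel2

variable {Y : Type*} [TopologicalSpace Y]

noncomputable def lexmin (h : (ℕ → ℕ) → Y) (K : Set (ℕ → ℕ)) (y : Y) : ℕ → ℕ
  | k => sInf {n | y ∈ h '' (K ∩ {x | (∀ i, i < k → x i = lexmin h K y i) ∧ x k = n})}
  termination_by k => k
  decreasing_by omega

lemma lexmin_def (h : (ℕ → ℕ) → Y) (K : Set (ℕ → ℕ)) (y : Y) (k : ℕ) :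
    lexmin h K y k
      = sInf {n | y ∈ h '' (K ∩ {x | (∀ i, i < k → x i = lexmin h K y i) ∧ x k = n})} := by
  rw [lexmin]

lemma lexmin_spec (h : (ℕ → ℕ) → Y) (K : Set (ℕ → ℕ)) {y : Y} (hy : y ∈ h '' K) :
    ∀ k, y ∈ h '' (K ∩ {x | ∀ i, i < k → x i = lexmin h K y i}) := by
  intro k
  induction k with
  | zero => simpa using hy
  | succ k ih =>
    have hne : {n | y ∈ h '' (K ∩ {x | (∀ i, i < k → x i = lexmin h K y i) ∧ x k = n})}.Nonempty := by
      obtain ⟨x, ⟨hxK, hxp⟩, hxy⟩ := ih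
      exact ⟨x k, ⟨x, ⟨hxK, hxp, rfl⟩, hxy⟩⟩
    have hmem := Nat.sInf_mem hne
    rw [← lexmin_def] at hmem
    obtain ⟨x, ⟨hxK, hxp, hxk⟩, hxy⟩ := hmem
    refine ⟨x, ⟨hxK, ?_⟩, hxy⟩
    intro i hi
    rcases Nat.lt_succ_iff_lt_or_eq.1 hi with hi' | rfl
    · exact hxp i hi'
    · exact hxk

lemma lexmin_section [T2Space Y] {h : (ℕ → ℕ) → Y} {K : Set (ℕ → ℕ)}
    (hK : IsCompact K) (hc : Continuous h) {y : Y} (hy : y ∈ h '' K) :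
    lexmin h K y ∈ K ∧ h (lexmin h K y) = y := by
  set t : ℕ → Set (ℕ → ℕ) :=
    fun k => K ∩ h ⁻¹' {y} ∩ {x | ∀ i, i < k → x i = lexmin h K y i} with ht
  have htcl : ∀ k, IsClosed (t k) := by
    intro k
    refine ((hK.isClosed.inter (isClosed_singleton.preimage hc)).inter ?_)
    have : {x : ℕ → ℕ | ∀ i, i < k → x i = lexmin h K y i}
        = ⋂ i, ⋂ _ : i < k, (fun x : ℕ → ℕ => x i) ⁻¹' {lexmin h K y i} := by
      ext x; simp
    rw [this]
    exact isClosed_iInter fun i => isClosed_iInter fun _ =>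
      (isClosed_singleton.preimage (continuous_apply i))
  have htn : ∀ k, (t k).Nonempty := by
    intro k
    obtain ⟨x, ⟨hxK, hxp⟩, hxy⟩ := lexmin_spec h K hy k
    exact ⟨x, ⟨hxK, hxy⟩, hxp⟩
  have htd : ∀ k, t (k + 1) ⊆ t k := by
    intro k x hx
    exact ⟨hx.1, fun i hi => hx.2 i (hi.trans (Nat.lt_succ_self k))⟩
  have ht0 : IsCompact (t 0) := hK.of_isClosed_subset (htcl 0) (fun x hx => hx.1.1)
  obtain ⟨x, hx⟩ := IsCompact.nonempty_iInter_of_sequence_nonempty_isCompact_isClosed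
    t htd htn ht0 htcl
  simp only [mem_iInter] at hx
  have hxeq : x = lexmin h K y := by
    funext i
    exact (hx (i + 1)).2 i (Nat.lt_succ_self i)
  have h1 := (hx 0).1
  rw [hxeq] at h1
  exact ⟨h1.1, h1.2⟩

lemma lexmin_measurable [T2Space Y] {mY : MeasurableSpace Y} [BorelSpace Y]
    {h : (ℕ → ℕ) → Y} {K : Set (ℕ → ℕ)} (hK : IsCompact K) (hc : Continuous h) :
    Measurable (lexmin h K) := by
  have key : ∀ k, Measurable (fun y => lexmin h K y k) := by
    intro k
    induction k using Nat.strong_induction_on with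
    | _ k ih =>
      set B : (Fin k → ℕ) → ℕ → Set Y := fun s n =>
        h '' (K ∩ {x | (∀ i : Fin k, x i = s i) ∧ x k = n}) with hB
    -- each B s n is measurable
      have hBm : ∀ s n, MeasurableSet (B s n) := by
        intro s n
        have hcl : IsClosed {x : ℕ → ℕ | (∀ i : Fin k, x (i : ℕ) = s i) ∧ x k = n} := by
          have : {x : ℕ → ℕ | (∀ i : Fin k, x (i : ℕ) = s i) ∧ x k = n}
              = (⋂ i : Fin k, (fun x : ℕ → ℕ => x (i : ℕ)) ⁻¹' {s i})
                ∩ (fun x : ℕ → ℕ => x k) ⁻¹' {n} := by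
            ext x; simp
          rw [this]
          exact (isClosed_iInter fun i =>
            isClosed_singleton.preimage (continuous_apply _)).inter
            (isClosed_singleton.preimage (continuous_apply _))
        have : IsCompact (K ∩ {x | (∀ i : Fin k, x (i : ℕ) = s i) ∧ x k = n}) :=
          hK.inter_right hcl
        exact ((this.image hc).isClosed).measurableSet
      set P : Y → (Fin k → ℕ) := fun y i => lexmin h K y i with hP
      have hPm : ∀ s : Fin k → ℕ, MeasurableSet {y | P y = s} := by
        intro s
        have : {y | P y = s} = ⋂ i : Fin k, (fun y => lexmin h K y (i : ℕ)) ⁻¹' {s i} := by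
          ext y
          simp [hP, funext_iff]
        rw [this]
        exact MeasurableSet.iInter fun i => (ih i i.2) (measurableSet_singleton _)
      have heq : (fun y => lexmin h K y k) = fun y => sInf {n | y ∈ B (P y) n} := by
        funext y
        rw [lexmin_def]
        congr 1
        ext n
        simp only [mem_setOf_eq, hB, hP]
        constructor
        · rintro ⟨x, ⟨hxK, hxp, hxk⟩, hxy⟩
          exact ⟨x, ⟨hxK, fun i => hxp i i.2, hxk⟩, hxy⟩
        · rintro ⟨x, ⟨hxK, hxp, hxk⟩, hxy⟩
          exact ⟨x, ⟨hxK, fun i hi => hxp ⟨i, hi⟩, hxk⟩, hxy⟩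
      rw [heq]
      exact VNSel.measurable_comp_countable hPm
        (fun s => VNSel.measurable_sInf_mem (hBm s))
  exact measurable_pi_lambda _ key

end VNSel2

namespace VNSel3

open MeasureTheory Set Function Filter Topology ENNReal

variable {Y : Type*}

/-- bounded prefix sets -/
def Cs (b : ℕ → ℕ) (k : ℕ) : Set (ℕ → ℕ) := {x | ∀ i, i < k → x i ≤ b i}

def Ks (b : ℕ → ℕ) : Set (ℕ → ℕ) := {x | ∀ i, x i ≤ b i}

lemma isCompact_Ks (b : ℕ → ℕ) : IsCompact (Ks b) := by
  have : Ks b = Set.pi univ fun i => Iic (b i) := by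
    ext x; simp [Ks, Set.pi]
  rw [this]
  exact isCompact_univ_pi fun i => (Set.finite_Iic (b i)).isCompact

lemma approx [TopologicalSpace Y] {h : (ℕ → ℕ) → Y} (hc : Continuous h) (b : ℕ → ℕ)
    {U : Set Y} (hU : IsOpen U) (hKU : h '' Ks b ⊆ U) : ∃ k, h '' Cs b k ⊆ U := by
  by_contra hcon
  push_neg at hcon
  have : ∀ k, ∃ x, x ∈ Cs b k ∧ h x ∉ U := by
    intro k
    obtain ⟨y, hy, hyU⟩ := Set.not_subset.1 (hcon k)
    obtain ⟨x, hx, rfl⟩ := hy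
    exact ⟨x, hx, hyU⟩
  choose x hx hxU using this
  set x' : ℕ → ℕ → ℕ := fun k i => min (x k i) (b i) with hx'
  have hx'K : ∀ k, x' k ∈ Ks b := fun k i => min_le_right _ _
  obtain ⟨a, haK, φ, hφ, hφt⟩ := (isCompact_Ks b).tendsto_subseq hx'K
  have hxt : Tendsto (fun k => x (φ k)) atTop (𝓝 a) := by
    rw [tendsto_pi_nhds]
    intro i
    have h1 : Tendsto (fun k => x' (φ k) i) atTop (𝓝 (a i)) :=
      (tendsto_pi_nhds.1 hφt) i
    apply h1.congr'
    filter_upwards [eventually_gt_atTop i] with k hk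
    have hik : i < φ k := hk.trans_le (hφ.le_apply)
    have := hx (φ k) i hik
    simp [hx', min_eq_left this]
  have haU : h a ∈ U := hKU ⟨a, haK, rfl⟩
  have : ∀ᶠ k in atTop, h (x (φ k)) ∈ U :=
    ((hc.tendsto a).comp hxt).eventually (hU.eventually_mem haU)
  obtain ⟨k, hk⟩ := this.exists
  exact hxU (φ k) hk

lemma step [MeasurableSpace Y] (μ : Measure Y) [IsFiniteMeasure μ]
    (h : (ℕ → ℕ) → Y) (c : ℕ → ℕ) (k : ℕ) {δ : ℝ≥0∞} (hδ : δ ≠ 0) (hδ' : δ ≠ ⊤) :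
    ∃ n, μ (h '' Cs c k) ≤ μ (h '' Cs (update c k n) (k + 1)) + δ := by
  have hmono : Monotone fun n => h '' Cs (update c k n) (k + 1) := by
    intro m n hmn
    apply image_mono
    intro x hxm i hi
    rcases Nat.lt_succ_iff_lt_or_eq.1 hi with hi' | rfl
    · have := hxm i hi
      rwa [update_of_ne hi'.ne] at this ⊢
    · have := hxm i hi
      rw [update_self] at this ⊢
      exact this.trans hmn
  have hsets : (⋃ n, Cs (update c k n) (k + 1)) = Cs c k := by
    ext z
    simp only [Set.mem_iUnion]
    constructor
    · rintro ⟨n, hz⟩ i hi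
      have := hz i (hi.trans (Nat.lt_succ_self k))
      rwa [update_of_ne hi.ne] at this
    · intro hz
      refine ⟨z k, fun i hi => ?_⟩
      rcases Nat.lt_succ_iff_lt_or_eq.1 hi with hi' | rfl
      · rw [update_of_ne hi'.ne]; exact hz i hi'
      · rw [update_self]
  have hunion : (⋃ n, h '' Cs (update c k n) (k + 1)) = h '' Cs c k := by
    rw [← image_iUnion, hsets]
  have hsup : μ (h '' Cs c k) = ⨆ n, μ (h '' Cs (update c k n) (k + 1)) := by
    rw [← hunion, hmono.measure_iUnion]
  by_contra hcon
  push_neg at hcon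
  have hA0 : μ (h '' Cs c k) ≠ 0 := by
    intro h0
    exact absurd (hcon 0) (by simp [h0])
  have hle : ∀ n, μ (h '' Cs (update c k n) (k + 1)) ≤ μ (h '' Cs c k) - δ := by
    intro n
    exact ENNReal.le_sub_of_add_le_right hδ' (hcon n).le
  have : μ (h '' Cs c k) ≤ μ (h '' Cs c k) - δ := hsup.le.trans (iSup_le hle)
  exact absurd this (not_le.2 (ENNReal.sub_lt_self (measure_ne_top μ _) hA0 hδ))

lemma capacity [TopologicalSpace Y] [PolishSpace Y] [MeasurableSpace Y] [BorelSpace Y]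
    {h : (ℕ → ℕ) → Y} (hc : Continuous h) (hs : Surjective h)
    (μ : Measure Y) [IsFiniteMeasure μ] {ε : ℝ≥0∞} (hε : ε ≠ 0) :
    ∃ b : ℕ → ℕ, μ univ ≤ μ (h '' Ks b) + ε := by
  have h2 : (ε / 2) ≠ 0 := by
    simp [ENNReal.div_eq_zero_iff, hε]
  obtain ⟨ε', hε'pos, hε'sum⟩ := ENNReal.exists_pos_sum_of_countable h2 ℕ
  choose Nn hNn using fun c k => step μ h c k (by exact_mod_cast (hε'pos k).ne') ENNReal.coe_ne_top
  set c : ℕ → ℕ → ℕ := fun k =>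
    Nat.rec (motive := fun _ => ℕ → ℕ) (fun _ => 0) (fun k ck => update ck k (Nn ck k)) k
    with hcdef
  have hc_succ : ∀ k, c (k + 1) = update (c k) k (Nn (c k) k) := fun k => rfl
  set b : ℕ → ℕ := fun i => c (i + 1) i with hb
  have stab : ∀ k i, i < k → c k i = b i := by
    intro k
    induction k with
    | zero => omega
    | succ k ih =>
      intro i hi
      rcases Nat.lt_succ_iff_lt_or_eq.1 hi with hi' | rfl
      · rw [hc_succ, update_of_ne hi'.ne, ih i hi']
      · rfl
  have CsEq : ∀ k, Cs b k = Cs (c k) k := by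
    intro k
    ext x
    constructor <;> intro hx i hi
    · rw [stab k i hi]; exact hx i hi
    · rw [← stab k i hi]; exact hx i hi
  have chain : ∀ k, μ univ ≤ μ (h '' Cs b k) + ∑ i ∈ Finset.range k, (ε' i : ℝ≥0∞) := by
    intro k
    induction k with
    | zero =>
      have : Cs b 0 = univ := by ext x; simp [Cs]
      rw [this, image_univ, hs.range_eq]
      simp
    | succ k ih =>
      have hstep : μ (h '' Cs b k) ≤ μ (h '' Cs b (k + 1)) + ε' k := by
        rw [CsEq k, CsEq (k + 1), hc_succ]
        exact hNn (c k) k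
      calc μ univ ≤ μ (h '' Cs b k) + ∑ i ∈ Finset.range k, (ε' i : ℝ≥0∞) := ih
        _ ≤ (μ (h '' Cs b (k + 1)) + ε' k) + ∑ i ∈ Finset.range k, (ε' i : ℝ≥0∞) :=
            add_le_add_left hstep _
        _ = μ (h '' Cs b (k + 1)) + ∑ i ∈ Finset.range (k + 1), (ε' i : ℝ≥0∞) := by
            rw [Finset.sum_range_succ]; ring
  have chain' : ∀ k, μ univ ≤ μ (h '' Cs b k) + ε / 2 := by
    intro k
    refine (chain k).trans (add_le_add_right ?_ _)
    exact (ENNReal.sum_le_tsum _).trans hε'sum.le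
  -- outer regularity
  obtain ⟨U, hTU, hUopen, hUμ⟩ :=
    Set.exists_isOpen_lt_add (h '' Ks b) (measure_ne_top μ _) h2
  obtain ⟨k, hk⟩ := approx hc b hUopen hTU
  refine ⟨b, ?_⟩
  calc μ univ ≤ μ (h '' Cs b k) + ε / 2 := chain' k
    _ ≤ μ U + ε / 2 := add_le_add_left (measure_mono hk) _
    _ ≤ (μ (h '' Ks b) + ε / 2) + ε / 2 := add_le_add_left hUμ.le _
    _ = μ (h '' Ks b) + ε := by rw [add_assoc, ENNReal.add_halves]

end VNSel3

namespace VNSel4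

open MeasureTheory Set Function Filter Topology ENNReal VNSel2 VNSel3

lemma main_Z {Y : Type*} [MeasurableSpace Y] [TopologicalSpace Y] [PolishSpace Y] [BorelSpace Y]
    (h : (ℕ → ℕ) → Y) (hc : Continuous h) (hs : Surjective h)
    (μ : Measure Y) [IsFiniteMeasure μ] :
    ∃ (N : Set Y) (g : Y → (ℕ → ℕ)), MeasurableSet N ∧ μ N = 0 ∧ Measurable g ∧
      ∀ y ∉ N, h (g y) = y := by
  classical
  have hbm : ∀ m : ℕ, ∃ b : ℕ → ℕ, μ univ ≤ μ (h '' Ks b) + ((m : ℝ≥0∞) + 1)⁻¹ := by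
    intro m
    refine capacity hc hs μ ?_
    simp [ENNReal.inv_ne_zero]
  choose b hbμ using hbm
  set A : ℕ → Set Y := fun m => h '' Ks (b m) with hA
  have hAclosed : ∀ m, IsClosed (A m) := fun m => ((isCompact_Ks (b m)).image hc).isClosed
  have hAmeas : ∀ m, MeasurableSet (A m) := fun m => (hAclosed m).measurableSet
  set N : Set Y := ⋂ m, (A m)ᶜ with hN
  have hNmeas : MeasurableSet N := MeasurableSet.iInter fun m => (hAmeas m).compl
  have hNle : ∀ m : ℕ, μ N ≤ ((m : ℝ≥0∞) + 1)⁻¹ := by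
    intro m
    have hmono : μ N ≤ μ ((A m)ᶜ) := measure_mono (iInter_subset _ m)
    refine hmono.trans ?_
    rw [measure_compl (hAmeas m) (measure_ne_top μ _)]
    rw [tsub_le_iff_right]
    rw [add_comm]
    exact hbμ m
  have hN0 : μ N = 0 := by
    by_contra h0
    obtain ⟨n, hn⟩ := ENNReal.exists_inv_nat_lt h0
    have h1 := hNle n
    have h2 : ((n : ℝ≥0∞) + 1)⁻¹ ≤ (n : ℝ≥0∞)⁻¹ :=
      ENNReal.inv_le_inv' le_self_add
    exact absurd (h1.trans h2) (not_le.2 hn)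
  have hex : ∀ y, ∃ m, y ∈ A m ∨ y ∈ N := by
    intro y
    by_cases hy : y ∈ N
    · exact ⟨0, Or.inr hy⟩
    · simp only [hN, mem_iInter, mem_compl_iff, not_forall, not_not] at hy
      obtain ⟨m, hm⟩ := hy
      exact ⟨m, Or.inl hm⟩
  have hpm : ∀ m, MeasurableSet {y | y ∈ A m ∨ y ∈ N} := by
    intro m
    have : {y | y ∈ A m ∨ y ∈ N} = A m ∪ N := rfl
    rw [this]
    exact (hAmeas m).union hNmeas
  have hgm : Measurable fun y => lexmin h (Ks (b (Nat.find (hex y)))) y :=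
    Measurable.find (f := fun m y => lexmin h (Ks (b m)) y)
      (fun m => lexmin_measurable (isCompact_Ks (b m)) hc) hpm hex
  refine ⟨N, fun y => lexmin h (Ks (b (Nat.find (hex y)))) y, hNmeas, hN0, hgm, ?_⟩
  intro y hyN
  rcases Nat.find_spec (hex y) with hmem | hmem
  · exact (lexmin_section (isCompact_Ks _) hc hmem).2
  · exact absurd hmem hyN

end VNSel4

open MeasureTheory

/-- von Neumann-type measurable selection. If `f : X → Y` is a surjective Borel
map between standard Borel spaces and `μ` is a finite measure on `Y`, there is a Borel null
set `N ⊆ Y` and a Borel map `g` with `f (g y) = y` for all `y ∉ N`. -/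
theorem exists_measurable_section_ae
    (X Y : Type*) [MeasurableSpace X] [StandardBorelSpace X]
    [MeasurableSpace Y] [StandardBorelSpace Y]
    (f : X → Y) (hf : Measurable f) (hsurj : Function.Surjective f)
    (μ : Measure Y) [IsFiniteMeasure μ] :
    ∃ (N : Set Y) (g : Y → X), MeasurableSet N ∧ μ N = 0 ∧ Measurable g ∧
      ∀ y ∉ N, f (g y) = y := by
  rcases isEmpty_or_nonempty Y with hY | hY
  · refine ⟨∅, fun y => (IsEmpty.false y).elim, MeasurableSet.empty, measure_empty,
      measurable_of_empty _, fun y _ => (IsEmpty.false y).elim⟩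
  · have hXne : Nonempty X := by
      obtain ⟨y⟩ := hY
      obtain ⟨x, -⟩ := hsurj y
      exact ⟨x⟩
    letI := upgradeStandardBorel X
    letI := upgradeStandardBorel Y
    have hXeq : ‹MeasurableSpace X› = borel X := BorelSpace.measurable_eq
    obtain ⟨t', ht'le, hfc, ht'polish⟩ := hf.exists_continuous
    obtain ⟨σ, hσc, hσs⟩ := @PolishSpace.exists_nat_nat_continuous_surjective X t' ht'polish hXne
    have hcomp : Continuous (f ∘ σ) := hfc.comp hσc
    have hcsurj : Function.Surjective (f ∘ σ) := hsurj.comp hσs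
    have h1 : @Measurable (ℕ → ℕ) X _ (@borel X t') σ := by
      letI : TopologicalSpace X := t'
      letI mX' : MeasurableSpace X := @borel X t'
      haveI : BorelSpace X := ⟨rfl⟩
      exact hσc.measurable
    have hσm : Measurable σ := by
      refine h1.mono le_rfl ?_
      rw [hXeq]
      exact borel_anti ht'le
    obtain ⟨N, g₀, hN, hN0, hg₀, hsec⟩ := VNSel4.main_Z (f ∘ σ) hcomp hcsurj μ
    exact ⟨N, σ ∘ g₀, hN, hN0, hσm.comp hg₀, fun y hy => hsec y hy⟩
end

section
/- Let X be a standard Borel space, Y a countably separated measurable space, and f : X → Y a surjective Borel map. Then f admits an absolutely measurable cross section, i.e., a function g : Y → X with f ∘ g = id_Y such that g⁻¹(E) is absolutely measurable in Y for every Borel set E ⊆ X. -/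
open MeasureTheory

/-- A subset `A` of a measurable space is absolutely measurable if for every finite positive
measure `μ` there are measurable sets `E ⊆ A ⊆ F` with `μ (F \ E) = 0`. -/
def AbsolutelyMeasurable {Y : Type*} [MeasurableSpace Y] (A : Set Y) : Prop :=
  ∀ μ : Measure Y, IsFiniteMeasure μ →
    ∃ E F : Set Y, MeasurableSet E ∧ MeasurableSet F ∧ E ⊆ A ∧ A ⊆ F ∧ μ (F \ E) = 0

open Set

namespace AMSection


/-- Iterated refinement of a set of sequences: at stage `k+1`, keep only elements whose `k`-th
coordinate is minimal among stage-`k` elements. -/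
def pref (K : Set (ℕ → ℕ)) : ℕ → Set (ℕ → ℕ)
  | 0 => K
  | (k+1) => {a ∈ pref K k | a k = sInf ((fun a : ℕ → ℕ => a k) '' pref K k)}

/-- The lexicographically least element of a closed nonempty subset of Baire space. -/
noncomputable def leastSeq (K : Set (ℕ → ℕ)) (k : ℕ) : ℕ :=
  sInf ((fun a : ℕ → ℕ => a k) '' pref K k)

lemma pref_succ (K : Set (ℕ → ℕ)) (k : ℕ) :
    pref K (k+1) = {a ∈ pref K k | a k = leastSeq K k} := rfl

lemma pref_subset (K : Set (ℕ → ℕ)) : ∀ k, pref K k ⊆ K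
  | 0 => subset_rfl
  | (k+1) => fun a ha => pref_subset K k ha.1

lemma pref_nonempty {K : Set (ℕ → ℕ)} (hK : K.Nonempty) : ∀ k, (pref K k).Nonempty
  | 0 => hK
  | (k+1) => by
      have h := Nat.sInf_mem ((pref_nonempty hK k).image (fun a : ℕ → ℕ => a k))
      obtain ⟨a, ha, hak⟩ := h
      exact ⟨a, ha, hak⟩

lemma mem_pref {K : Set (ℕ → ℕ)} (hK : K.Nonempty) :
    ∀ k (a : ℕ → ℕ), a ∈ pref K k ↔ (a ∈ K ∧ ∀ i < k, a i = leastSeq K i)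
  | 0, a => by simp [pref]
  | (k+1), a => by
      rw [pref_succ]
      constructor
      · rintro ⟨ha, hk⟩
        obtain ⟨haK, hpre⟩ := (mem_pref hK k a).1 ha
        refine ⟨haK, fun i hi => ?_⟩
        rcases Nat.lt_succ_iff_lt_or_eq.1 hi with h | h
        · exact hpre i h
        · subst h; exact hk
      · rintro ⟨haK, hpre⟩
        exact ⟨(mem_pref hK k a).2 ⟨haK, fun i hi => hpre i (hi.trans (Nat.lt_succ_self k))⟩,
          hpre k (Nat.lt_succ_self k)⟩

lemma leastSeq_mem {K : Set (ℕ → ℕ)} (hK : K.Nonempty) (hcl : IsClosed K) :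
    leastSeq K ∈ K := by
  choose a ha using fun k => pref_nonempty hK k
  have htendsto : Filter.Tendsto a Filter.atTop (nhds (leastSeq K)) := by
    rw [tendsto_pi_nhds]
    intro i
    apply Filter.Tendsto.congr' (f₁ := fun _ => leastSeq K i)
    · filter_upwards [Filter.eventually_ge_atTop (i+1)] with k hk
      exact (((mem_pref hK k _).1 (ha k)).2 i (by omega)).symm
    · exact tendsto_const_nhds
  exact hcl.mem_of_tendsto htendsto
    (Filter.Eventually.of_forall fun k => pref_subset K k (ha k))

lemma leastSeq_le {K : Set (ℕ → ℕ)} (hK : K.Nonempty) {a : ℕ → ℕ} {k : ℕ}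
    (ha : a ∈ K) (hpre : ∀ i < k, a i = leastSeq K i) : leastSeq K k ≤ a k :=
  Nat.sInf_le ⟨a, (mem_pref hK k a).2 ⟨ha, hpre⟩, rfl⟩

lemma leastSeq_prefix_iff {K : Set (ℕ → ℕ)} (hK : K.Nonempty) (u : ℕ → ℕ) (k : ℕ) :
    (∀ i < k, leastSeq K i = u i) ↔
      ∀ j < k, ((∃ a ∈ K, ∀ i < j + 1, a i = u i) ∧
        ∀ m < u j, ¬ ∃ a ∈ K, (∀ i < j, a i = u i) ∧ a j = m) := by
  induction k with
  | zero => simp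
  | succ k ih =>
    constructor
    · intro hpre
      intro j hj
      rcases Nat.lt_succ_iff_lt_or_eq.1 hj with h | h
      · exact (ih.1 fun i hi => hpre i (hi.trans (Nat.lt_succ_self k))) j h
      · subst h
        constructor
        · obtain ⟨a, ha⟩ := pref_nonempty hK (j+1)
          obtain ⟨haK, hap⟩ := (mem_pref hK (j+1) a).1 ha
          exact ⟨a, haK, fun i hi => (hap i hi).trans (hpre i hi)⟩
        · rintro m hm ⟨a, haK, hpre', haj⟩
          have : leastSeq K j ≤ a j :=
            leastSeq_le hK haK fun i hi => (hpre' i hi).trans (hpre i (hi.trans hj)).symm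
          have hj' := hpre j hj
          omega
    · intro hcond
      have hk : ∀ i < k, leastSeq K i = u i :=
        ih.2 fun j hj => hcond j (hj.trans (Nat.lt_succ_self k))
      intro i hi
      rcases Nat.lt_succ_iff_lt_or_eq.1 hi with h | h
      · exact hk i h
      · subst h
        obtain ⟨⟨a, haK, hau⟩, hmin⟩ := hcond i (Nat.lt_succ_self i)
        have hle : leastSeq K i ≤ u i := by
          have := leastSeq_le hK haK
            (fun l hl => (hau l (hl.trans (Nat.lt_succ_self i))).trans (hk l hl).symm)
          rw [hau i (Nat.lt_succ_self i)] at this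
          exact this
        rcases eq_or_lt_of_le hle with h | h
        · exact h
        · exfalso
          obtain ⟨b, hb⟩ := pref_nonempty hK (i+1)
          obtain ⟨hbK, hbp⟩ := (mem_pref hK (i+1) b).1 hb
          exact hmin (leastSeq K i) h
            ⟨b, hbK, fun l hl => (hbp l (hl.trans (Nat.lt_succ_self i))).trans (hk l hl),
              hbp i (Nat.lt_succ_self i)⟩



lemma exists_le_add_of_iSup {a : ℕ → ENNReal} {S ε : ENNReal} (hS : S = ⨆ n, a n)
    (hfin : S ≠ ⊤) (hε : ε ≠ 0) : ∃ n, S ≤ a n + ε := by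
  by_cases h0 : S = 0
  · exact ⟨0, by simp [h0]⟩
  · have hlt : S - ε < S := ENNReal.sub_lt_self hfin h0 hε
    have hlt2 : S - ε < ⨆ n, a n := by rw [← hS]; exact hlt
    obtain ⟨n, hn⟩ := lt_iSup_iff.1 hlt2
    exact ⟨n, tsub_le_iff_right.1 hn.le⟩

/-- Inner approximation by compact sets for continuous images of Baire space. -/
lemma inner_compact {α : Type*} [TopologicalSpace α] [T2Space α] [FirstCountableTopology α]
    [MeasurableSpace α] [OpensMeasurableSpace α]
    (φ : (ℕ → ℕ) → α) (hφ : Continuous φ) (ν : Measure α) [IsFiniteMeasure ν]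
    {ε : ENNReal} (hε : ε ≠ 0) :
    ∃ K, IsCompact K ∧ K ⊆ Set.range φ ∧ ν (Set.range φ) ≤ ν K + ε := by
  obtain ⟨d, hd0, hdsum⟩ := ENNReal.exists_pos_sum_of_countable hε ℕ
  -- choice of bounds making the image measure decrease slowly
  have pick : ∀ (W : Set (ℕ → ℕ)) (k : ℕ),
      ∃ n : ℕ, ν (φ '' W) ≤ ν (φ '' {x ∈ W | x k ≤ n}) + d k := by
    intro W k
    have hmono : Monotone fun n : ℕ => φ '' {x ∈ W | x k ≤ n} := fun m n hmn =>
      image_mono fun x hx => ⟨hx.1, hx.2.trans hmn⟩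
    have hU : (⋃ n : ℕ, φ '' {x ∈ W | x k ≤ n}) = φ '' W := by
      apply subset_antisymm
      · exact iUnion_subset fun n => image_mono (sep_subset _ _)
      · rintro y ⟨x, hx, rfl⟩
        exact mem_iUnion.2 ⟨x k, mem_image_of_mem φ ⟨hx, le_rfl⟩⟩
    have hsup : ν (φ '' W) = ⨆ n, ν (φ '' {x ∈ W | x k ≤ n}) := by
      rw [← hU]; exact hmono.directed_le.measure_iUnion
    exact exists_le_add_of_iSup hsup (measure_ne_top ν _)
      (ENNReal.coe_ne_zero.2 (hd0 k).ne')
  choose nf hnf using pick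
  -- the decreasing sets V k and the bounds
  let V : ℕ → Set (ℕ → ℕ) := fun k => Nat.rec Set.univ (fun k W => {x ∈ W | x k ≤ nf W k}) k
  have hV0 : V 0 = Set.univ := rfl
  have hVsucc : ∀ k, V (k+1) = {x ∈ V k | x k ≤ nf (V k) k} := fun k => rfl
  set b : ℕ → ℕ := fun k => nf (V k) k with hb
  have hVle : ∀ k, V (k+1) ⊆ V k := fun k x hx => hx.1
  have hVanti : Antitone V := antitone_nat_of_succ_le hVle
  have hVeq : ∀ k, V k = {x | ∀ i < k, x i ≤ b i} := by
    intro k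
    induction k with
    | zero => simp [hV0]
    | succ k ih =>
      have hstep : V (k+1) = {x ∈ V k | x k ≤ b k} := rfl
      rw [hstep]
      ext x
      simp only [mem_sep_iff, ih, mem_setOf_eq]
      constructor
      · rintro ⟨h1, h2⟩ i hi
        rcases Nat.lt_succ_iff_lt_or_eq.1 hi with h | h
        · exact h1 i h
        · subst h; exact h2
      · intro h
        exact ⟨fun i hi => h i (hi.trans (Nat.lt_succ_self k)),
          h k (Nat.lt_succ_self k)⟩
  -- measure estimate along the stages
  have hest : ∀ k, ν (φ '' Set.univ) ≤ ν (φ '' V k) + ∑ j ∈ Finset.range k, (d j : ENNReal) := by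
    intro k
    induction k with
    | zero => simp [hV0]
    | succ k ih =>
      calc ν (φ '' Set.univ) ≤ ν (φ '' V k) + ∑ j ∈ Finset.range k, (d j : ENNReal) := ih
        _ ≤ (ν (φ '' V (k+1)) + d k) + ∑ j ∈ Finset.range k, (d j : ENNReal) := by
            gcongr
            exact hnf (V k) k
        _ = ν (φ '' V (k+1)) + ∑ j ∈ Finset.range (k+1), (d j : ENNReal) := by
            rw [Finset.sum_range_succ]; ring
  -- the compact set
  have hSc : IsCompact {x : ℕ → ℕ | ∀ i, x i ≤ b i} := by
    have : {x : ℕ → ℕ | ∀ i, x i ≤ b i} = Set.pi Set.univ fun i => Set.Iic (b i) := by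
      ext x; simp [Set.mem_pi, Set.mem_Iic, Pi.le_def]
    rw [this]
    exact isCompact_univ_pi fun i => (Set.finite_Iic (b i)).isCompact
  set Sb : Set (ℕ → ℕ) := {x : ℕ → ℕ | ∀ i, x i ≤ b i} with hSb
  refine ⟨φ '' Sb, hSc.image hφ, image_subset_range φ _, ?_⟩
  -- φ '' Sb contains the intersection of the closures
  have hclos : (⋂ k, closure (φ '' V k)) ⊆ φ '' Sb := by
    intro c hc
    obtain ⟨B, hB⟩ := (nhds c).exists_antitone_basis
    have hx : ∀ k, ∃ x, x ∈ V k ∧ φ x ∈ B k := by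
      intro k
      have hck : c ∈ closure (φ '' V k) := mem_iInter.1 hc k
      obtain ⟨y, hy1, hy2⟩ := mem_closure_iff_nhds.1 hck (B k) (hB.mem k)
      obtain ⟨x, hxV, rfl⟩ := hy2
      exact ⟨x, hxV, hy1⟩
    choose x hxV hxB using hx
    set y : ℕ → ℕ → ℕ := fun k i => min (x k i) (b i) with hy
    have hyS : ∀ k, y k ∈ Sb := fun k i => min_le_right _ _
    obtain ⟨a, haS, r, hr, har⟩ := hSc.tendsto_subseq hyS
    have hxr : Filter.Tendsto (fun k => x (r k)) Filter.atTop (nhds a) := by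
      rw [tendsto_pi_nhds]
      intro i
      have hyr := tendsto_pi_nhds.1 har i
      apply hyr.congr'
      filter_upwards [Filter.eventually_ge_atTop (i+1)] with k hk
      have h1 : x (r k) ∈ V (r k) := hxV (r k)
      rw [hVeq] at h1
      have h2 : x (r k) i ≤ b i := h1 i (lt_of_lt_of_le (by omega) (hr.le_apply))
      simp only [Function.comp_apply, hy, min_eq_left h2]
    have hφx : Filter.Tendsto (fun k => φ (x (r k))) Filter.atTop (nhds (φ a)) :=
      (hφ.tendsto a).comp hxr
    have hφc : Filter.Tendsto (fun k => φ (x (r k))) Filter.atTop (nhds c) := by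
      apply hB.tendsto
      intro k
      exact hB.antitone (hr.le_apply) (hxB (r k))
    exact ⟨a, haS, tendsto_nhds_unique hφx hφc⟩
  -- wrap up
  have hmeas : ∀ k, MeasurableSet (closure (φ '' V k)) := fun k =>
    isClosed_closure.measurableSet
  have hanti : Antitone fun k => closure (φ '' V k) := fun m n h =>
    closure_mono (image_mono (hVanti h))
  have hinter : ν (⋂ k, closure (φ '' V k)) = ⨅ k, ν (closure (φ '' V k)) := by
    apply Directed.measure_iInter (fun k => (hmeas k).nullMeasurableSet)
      hanti.directed_ge ⟨0, measure_ne_top ν _⟩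
  have hbound : ∀ k, ν (φ '' Set.univ) ≤ ν (closure (φ '' V k)) + ε := by
    intro k
    calc ν (φ '' Set.univ) ≤ ν (φ '' V k) + ∑ j ∈ Finset.range k, (d j : ENNReal) := hest k
      _ ≤ ν (closure (φ '' V k)) + ε := by
          gcongr
          · exact subset_closure
          · exact le_trans (ENNReal.sum_le_tsum _) hdsum.le
  have hlow : ν (φ '' Set.univ) ≤ ν (⋂ k, closure (φ '' V k)) + ε := by
    rw [hinter]
    refine tsub_le_iff_right.1 (le_iInf fun k => tsub_le_iff_right.2 (hbound k))
  calc ν (Set.range φ) = ν (φ '' Set.univ) := by rw [image_univ]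
    _ ≤ ν (⋂ k, closure (φ '' V k)) + ε := hlow
    _ ≤ ν (φ '' Sb) + ε := by gcongr




lemma analyticSet_absolutelyMeasurable {α : Type*} [TopologicalSpace α] [T2Space α]
    [SecondCountableTopology α] [MeasurableSpace α] [BorelSpace α]
    {A : Set α} (hA : AnalyticSet A) : AbsolutelyMeasurable A := by
  intro ν hν
  obtain ⟨F, hAF, hFm, hFA⟩ := exists_measurable_superset ν A
  have key : ∀ n : ℕ, ∃ K, IsCompact K ∧ K ⊆ A ∧ ν A ≤ ν K + ((n : ENNReal))⁻¹ := by
    intro n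
    rw [MeasureTheory.AnalyticSet_def] at hA
    rcases hA with rfl | ⟨φ, hφ, hrange⟩
    · exact ⟨∅, isCompact_empty, subset_rfl, by simp⟩
    · obtain ⟨K, hKc, hKr, hKν⟩ := inner_compact φ hφ ν
        (ENNReal.inv_ne_zero.2 (ENNReal.natCast_ne_top n))
      exact ⟨K, hKc, hrange ▸ hKr, by rw [← hrange]; exact hKν⟩
  choose K hKc hKA hKν using key
  refine ⟨⋃ n, K n, F, MeasurableSet.iUnion fun n => (hKc n).isClosed.measurableSet,
    hFm, iUnion_subset hKA, hAF, ?_⟩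
  set E := ⋃ n, K n with hE
  have hEm : MeasurableSet E := MeasurableSet.iUnion fun n => (hKc n).isClosed.measurableSet
  have hle : ν A ≤ ν E := by
    apply ENNReal.le_of_forall_pos_le_add
    intro ε hε hEfin
    obtain ⟨n, hn⟩ := ENNReal.exists_inv_nat_lt (ENNReal.coe_ne_zero.2 hε.ne')
    calc ν A ≤ ν (K n) + ((n : ENNReal))⁻¹ := hKν n
      _ ≤ ν E + ε := by
          gcongr
          exact subset_iUnion K n
  have hEF : E ⊆ F := (iUnion_subset hKA).trans hAF
  have : ν (F \ E) = ν F - ν E :=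
    measure_diff hEF hEm.nullMeasurableSet (measure_ne_top ν E)
  rw [this, hFA]
  exact tsub_eq_zero_of_le hle

lemma absolutelyMeasurable_empty {C : Type*} [MeasurableSpace C] :
    AbsolutelyMeasurable (∅ : Set C) := fun ν _ =>
  ⟨∅, ∅, MeasurableSet.empty, MeasurableSet.empty, subset_rfl, subset_rfl, by simp⟩

lemma absolutelyMeasurable_compl {C : Type*} [MeasurableSpace C] {A : Set C}
    (hA : AbsolutelyMeasurable A) : AbsolutelyMeasurable Aᶜ := by
  intro ν hν
  obtain ⟨E, F, hE, hF, hEA, hAF, h0⟩ := hA ν hν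
  refine ⟨Fᶜ, Eᶜ, hF.compl, hE.compl, compl_subset_compl.2 hAF, compl_subset_compl.2 hEA, ?_⟩
  have : Eᶜ \ Fᶜ = F \ E := by ext x; simp only [mem_diff, mem_compl_iff, not_not]; tauto
  rw [this]; exact h0

lemma absolutelyMeasurable_iUnion {C : Type*} [MeasurableSpace C] {A : ℕ → Set C}
    (hA : ∀ n, AbsolutelyMeasurable (A n)) : AbsolutelyMeasurable (⋃ n, A n) := by
  intro ν hν
  choose E F hE hF hEA hAF h0 using fun n => hA n ν hν
  refine ⟨⋃ n, E n, ⋃ n, F n, MeasurableSet.iUnion hE, MeasurableSet.iUnion hF,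
    iUnion_mono hEA, iUnion_mono hAF, ?_⟩
  apply measure_mono_null (t := ⋃ n, (F n \ E n))
  · rintro x ⟨hxF, hxE⟩
    simp only [mem_iUnion] at hxF ⊢
    obtain ⟨n, hn⟩ := hxF
    exact ⟨n, hn, fun h => hxE (mem_iUnion.2 ⟨n, h⟩)⟩
  · exact measure_iUnion_null h0

/-- The absolutely measurable sets, as a measurable space structure. -/
def umSpace (C : Type*) [MeasurableSpace C] : MeasurableSpace C where
  MeasurableSet' := AbsolutelyMeasurable
  measurableSet_empty := absolutelyMeasurable_empty
  measurableSet_compl := fun _ h => absolutelyMeasurable_compl h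
  measurableSet_iUnion := fun _ h => absolutelyMeasurable_iUnion h

lemma absolutelyMeasurable_of_generateFrom_analytic {C : Type*} [TopologicalSpace C]
    [T2Space C] [SecondCountableTopology C] [MeasurableSpace C] [BorelSpace C] {S : Set C}
    (hS : MeasurableSet[MeasurableSpace.generateFrom {s : Set C | AnalyticSet s}] S) :
    AbsolutelyMeasurable S := by
  have hle : MeasurableSpace.generateFrom {s : Set C | AnalyticSet s} ≤ umSpace C :=
    MeasurableSpace.generateFrom_le fun s hs => analyticSet_absolutelyMeasurable hs
  exact hle _ hS

lemma absolutelyMeasurable_preimage {Y C : Type*} [MeasurableSpace Y] [MeasurableSpace C]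
    {i : Y → C} (hi : Measurable i) {S : Set C} (hS : AbsolutelyMeasurable S) :
    AbsolutelyMeasurable (i ⁻¹' S) := by
  intro μ hμ
  haveI : IsFiniteMeasure (μ.map i) :=
    ⟨by rw [Measure.map_apply hi MeasurableSet.univ]; exact measure_lt_top μ _⟩
  obtain ⟨E, F, hE, hF, hES, hSF, h0⟩ := hS (μ.map i) inferInstance
  refine ⟨i ⁻¹' E, i ⁻¹' F, hi hE, hi hF, preimage_mono hES, preimage_mono hSF, ?_⟩
  have : i ⁻¹' F \ i ⁻¹' E = i ⁻¹' (F \ E) := rfl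
  rw [this, ← Measure.map_apply hi (hF.diff hE)]
  exact h0




variable {C : Type*} [TopologicalSpace C] [T1Space C]

-- The canonical selection: to `c`, associate the lexicographically least preimage under `π`.
open Classical in
noncomputable def sel (π : (ℕ → ℕ) → C) (c : C) : ℕ → ℕ :=
  if (π ⁻¹' {c}).Nonempty then leastSeq (π ⁻¹' {c}) else fun _ => 0

lemma sel_of_nonempty {π : (ℕ → ℕ) → C} {c : C} (h : (π ⁻¹' {c}).Nonempty) :
    sel π c = leastSeq (π ⁻¹' {c}) := by rw [sel, if_pos h]

lemma sel_of_empty {π : (ℕ → ℕ) → C} {c : C} (h : ¬ (π ⁻¹' {c}).Nonempty) :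
    sel π c = fun _ => 0 := by rw [sel, if_neg h]

lemma sel_spec {π : (ℕ → ℕ) → C} (hπ : Continuous π) {c : C}
    (h : (π ⁻¹' {c}).Nonempty) : π (sel π c) = c := by
  have hcl : IsClosed (π ⁻¹' {c}) := isClosed_singleton.preimage hπ
  have hmem : sel π c ∈ π ⁻¹' {c} := by
    rw [sel_of_nonempty h]
    exact leastSeq_mem h hcl
  exact hmem

private lemma update_iff (u : ℕ → ℕ) (j m : ℕ) (a : ℕ → ℕ) :
    ((∀ i < j, a i = u i) ∧ a j = m) ↔ (∀ i < j + 1, a i = Function.update u j m i) := by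
  constructor
  · rintro ⟨h1, h2⟩ i hi
    rcases Nat.lt_succ_iff_lt_or_eq.1 hi with h | h
    · rw [Function.update_of_ne h.ne, h1 i h]
    · subst h; rw [Function.update_self]; exact h2
  · intro h
    refine ⟨fun i hi => ?_, ?_⟩
    · rw [h i (hi.trans (Nat.lt_succ_self j)), Function.update_of_ne hi.ne]
    · rw [h j (Nat.lt_succ_self j), Function.update_self]

lemma sel_measurable {π : (ℕ → ℕ) → C} (hπ : Continuous π) :
    @Measurable C (ℕ → ℕ) (MeasurableSpace.generateFrom {s : Set C | AnalyticSet s}) _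
      (sel π) := by
  letI m : MeasurableSpace C := MeasurableSpace.generateFrom {s : Set C | AnalyticSet s}
  have hT : ∀ (v : ℕ → ℕ) (l : ℕ),
      MeasurableSet[m] {c | ∃ a, π a = c ∧ ∀ i < l, a i = v i} := by
    intro v l
    apply MeasurableSpace.measurableSet_generateFrom
    show AnalyticSet _
    have heq : {c | ∃ a, π a = c ∧ ∀ i < l, a i = v i}
        = π '' {a | ∀ i < l, a i = v i} := by
      ext c
      simp only [mem_setOf_eq, mem_image]
      exact ⟨fun ⟨a, h1, h2⟩ => ⟨a, h2, h1⟩, fun ⟨a, h1, h2⟩ => ⟨a, h2, h1⟩⟩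
    rw [heq]
    have hcl : IsClosed {a : ℕ → ℕ | ∀ i < l, a i = v i} := by
      have : {a : ℕ → ℕ | ∀ i < l, a i = v i}
          = ⋂ (i : ℕ) (_ : i < l), (fun a : ℕ → ℕ => a i) ⁻¹' {v i} := by
        ext a; simp
      rw [this]
      exact isClosed_iInter fun i => isClosed_iInter fun _ =>
        isClosed_singleton.preimage (continuous_apply i)
    exact (hcl.measurableSet.analyticSet).image_of_continuous hπ
  have hD : MeasurableSet[m] {c | (π ⁻¹' {c}).Nonempty} := by
    have : {c | (π ⁻¹' {c}).Nonempty}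
        = {c | ∃ a, π a = c ∧ ∀ i < 0, a i = (0 : ℕ)} := by
      ext c; simp [Set.Nonempty]
    rw [this]; exact hT (fun _ => 0) 0
  rw [measurable_pi_iff]
  intro k
  apply measurable_to_countable'
  intro n
  have hdec : (fun c => sel π c k) ⁻¹' {n}
      = ⋃ (w : Fin (k+1) → ℕ) (_ : w (Fin.last k) = n),
          {c | ∀ i : Fin (k+1), sel π c i = w i} := by
    ext c
    simp only [mem_preimage, mem_singleton_iff, mem_iUnion, mem_setOf_eq]
    constructor
    · intro h
      exact ⟨fun i => sel π c i, by simpa using h, fun i => rfl⟩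
    · rintro ⟨w, hw, hall⟩
      have h1 := hall (Fin.last k)
      rw [Fin.val_last] at h1
      rw [h1]; exact hw
  rw [hdec]
  apply MeasurableSet.iUnion
  intro w
  apply MeasurableSet.iUnion
  intro _
  -- translate to an unbounded prefix function
  set u : ℕ → ℕ := fun i => if h : i < k + 1 then w ⟨i, h⟩ else 0 with hu
  have htrans : {c | ∀ i : Fin (k+1), sel π c i = w i}
      = {c | ∀ i < k + 1, sel π c i = u i} := by
    ext c
    simp only [mem_setOf_eq]
    constructor
    · intro h i hi
      have : u i = w ⟨i, hi⟩ := by rw [hu]; exact dif_pos hi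
      rw [this]; exact h ⟨i, hi⟩
    · intro h i
      have := h i.1 i.2
      rwa [show u i.1 = w i by rw [hu]; exact dif_pos i.2] at this
  rw [htrans]
  -- split according to non-emptiness of the fiber
  set Q : Set C := ⋂ (j : ℕ) (_ : j < k + 1),
      ({c | ∃ a, π a = c ∧ ∀ i < j + 1, a i = u i} ∩
        ⋂ (m : ℕ) (_ : m < u j),
          {c | ∃ a, π a = c ∧ ∀ i < j + 1, a i = Function.update u j m i}ᶜ) with hQ
  have hQm : MeasurableSet[m] Q := by
    apply MeasurableSet.iInter; intro j
    apply MeasurableSet.iInter; intro _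
    exact (hT u (j+1)).inter (MeasurableSet.iInter fun m_ =>
      MeasurableSet.iInter fun _ => (hT _ (j+1)).compl)
  have hcore : ∀ c, (π ⁻¹' {c}).Nonempty →
      ((∀ i < k + 1, sel π c i = u i) ↔ c ∈ Q) := by
    intro c hc
    rw [sel_of_nonempty hc]
    rw [leastSeq_prefix_iff hc u (k+1)]
    rw [hQ]
    simp only [mem_iInter, mem_inter_iff, mem_setOf_eq, mem_compl_iff]
    apply forall_congr'; intro j
    apply imp_congr_right; intro hj
    apply and_congr
    · constructor
      · rintro ⟨a, ha, hpre⟩; exact ⟨a, ha, hpre⟩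
      · rintro ⟨a, ha, hpre⟩; exact ⟨a, ha, hpre⟩
    · apply forall_congr'; intro m_
      apply imp_congr_right; intro hm
      rw [not_iff_not]
      constructor
      · rintro ⟨a, haK, hp⟩
        exact ⟨a, haK, (update_iff u j m_ a).1 hp⟩
      · rintro ⟨a, haK, hp⟩
        exact ⟨a, haK, (update_iff u j m_ a).2 hp⟩
  by_cases hzero : ∀ i < k + 1, (0 : ℕ) = u i
  · have : {c | ∀ i < k + 1, sel π c i = u i}
        = ({c | (π ⁻¹' {c}).Nonempty} ∩ Q) ∪ {c | (π ⁻¹' {c}).Nonempty}ᶜ := by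
      ext c
      by_cases hc : (π ⁻¹' {c}).Nonempty
      · simp only [mem_setOf_eq, mem_union, mem_inter_iff, mem_compl_iff, hc,
          not_true_eq_false, or_false, true_and]
        exact hcore c hc
      · simp only [mem_setOf_eq, mem_union, mem_inter_iff, mem_compl_iff, hc,
          not_false_eq_true, or_true, iff_true]
        intro i hi
        rw [sel_of_empty hc]
        exact hzero i hi
    rw [this]
    exact (hD.inter hQm).union hD.compl
  · have : {c | ∀ i < k + 1, sel π c i = u i} = {c | (π ⁻¹' {c}).Nonempty} ∩ Q := by
      ext c
      by_cases hc : (π ⁻¹' {c}).Nonempty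
      · simp only [mem_setOf_eq, mem_inter_iff, hc, true_and]
        exact hcore c hc
      · simp only [mem_setOf_eq, mem_inter_iff, hc, false_and, iff_false]
        intro hcon
        apply hzero
        intro i hi
        have h2 := hcon i hi
        rw [sel_of_empty hc] at h2
        simpa using h2
    rw [this]
    exact hD.inter hQm

end AMSection

open AMSection Set

set_option maxHeartbeats 1000000 in
/-- Every surjective Borel map from a standard Borel space onto a countably
separated measurable space admits an absolutely measurable cross section. -/
theorem exists_absolutelyMeasurable_section
    (X Y : Type*) [MeasurableSpace X] [StandardBorelSpace X] [MeasurableSpace Y]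
    (hsep : ∃ c : ℕ → Set Y, (∀ n, MeasurableSet (c n)) ∧
      ∀ y z : Y, (∀ n, y ∈ c n ↔ z ∈ c n) → y = z)
    (f : X → Y) (hf : Measurable f) (hsurj : Function.Surjective f) :
    ∃ g : Y → X, (∀ y, f (g y) = y) ∧
      ∀ E : Set X, MeasurableSet E → AbsolutelyMeasurable (g ⁻¹' E) := by
  classical
  rcases isEmpty_or_nonempty Y with hY | hY
  · refine ⟨fun y => (hY.false y).elim, fun y => (hY.false y).elim, ?_⟩
    intro E hE μ hμ
    exact ⟨∅, ∅, MeasurableSet.empty, MeasurableSet.empty, empty_subset _,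
      fun y _ => (hY.false y).elim, by simp⟩
  obtain ⟨c, hcm, hcsep⟩ := hsep
  obtain ⟨y0⟩ := hY
  obtain ⟨x0, hx0⟩ := hsurj y0
  haveI : Nonempty X := ⟨x0⟩
  -- the injection `i : Y → ℕ → Bool` from the separating family
  set i : Y → ℕ → Bool := fun y n => if y ∈ c n then true else false with hidef
  have hi : Measurable i :=
    measurable_pi_lambda _ fun n => Measurable.ite (hcm n) measurable_const measurable_const
  have hiinj : Function.Injective i := by
    intro y z h
    apply hcsep
    intro n
    have h2 := congrFun h n
    by_cases hy : y ∈ c n <;> by_cases hz : z ∈ c n <;>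
      simp [hidef, hy, hz] at h2 ⊢ <;> tauto
  -- a measurable embedding `j : X → ℕ → ℕ`
  obtain ⟨j0, hj0m, hj0inj⟩ :=
    MeasurableSpace.measurable_injection_nat_bool_of_countablySeparated X
  set e : (ℕ → Bool) → ℕ → ℕ := fun g n => cond (g n) 1 0 with he
  have hec : Continuous e :=
    continuous_pi fun n =>
      (continuous_of_discreteTopology : Continuous fun b : Bool => cond b 1 0).comp
        (continuous_apply n)
  have heinj : Function.Injective e := by
    intro a b h
    funext n
    have h2 := congrFun h n
    cases ha : a n <;> cases hb : b n <;> simp [he, ha, hb] at h2 ⊢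
  set j : X → ℕ → ℕ := fun x => e (j0 x) with hj
  have hjm : Measurable j := hec.measurable.comp hj0m
  have hjinj : Function.Injective j := heinj.comp hj0inj
  have hjemb : MeasurableEmbedding j := hjm.measurableEmbedding hjinj
  -- the graph of the fibration, as an analytic subset of `(ℕ → Bool) × (ℕ → ℕ)`
  set h : X → ℕ → Bool := fun x => i (f x) with hh
  have hhm : Measurable h := hi.comp hf
  set θ : X → (ℕ → Bool) × (ℕ → ℕ) := fun x => (h x, j x) with hθ
  have hθm : Measurable θ := hhm.prodMk hjm
  have hθinj : Function.Injective θ := fun a b hab => hjinj (congrArg Prod.snd hab)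
  have hθemb : MeasurableEmbedding θ := hθm.measurableEmbedding hθinj
  have hHan : AnalyticSet (Set.range θ) := by
    haveI : PolishSpace (ℕ → Bool) := by
      haveI : TopologicalSpace.SeparableSpace (ℕ → Bool) := inferInstance
      haveI : TopologicalSpace.IsCompletelyMetrizableSpace (ℕ → Bool) := inferInstance
      infer_instance
    exact hθemb.measurableSet_range.analyticSet
  rw [MeasureTheory.AnalyticSet_def] at hHan
  have hHne : (Set.range θ).Nonempty := range_nonempty θ
  rcases hHan with hemp | ⟨ψ, hψc, hψr⟩
  · rw [hemp] at hHne; exact absurd hHne (by simp)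
  set π : (ℕ → ℕ) → (ℕ → Bool) := fun a => (ψ a).1 with hπdef
  have hπc : Continuous π := continuous_fst.comp hψc
  -- the cross section
  set s' : (ℕ → ℕ) → X :=
    fun a => if hx : ∃ x : X, j x = (ψ a).2 then hx.choose else x0 with hs'
  set g : Y → X := fun y => s' (sel π (i y)) with hg
  have hfiber : ∀ y : Y, (π ⁻¹' {i y}).Nonempty := by
    intro y
    obtain ⟨x, hx⟩ := hsurj y
    have hmem : θ x ∈ Set.range ψ := by rw [hψr]; exact mem_range_self x
    obtain ⟨a, ha⟩ := hmem
    refine ⟨a, ?_⟩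
    simp only [mem_preimage, mem_singleton_iff, hπdef]
    rw [ha, hθ]
    simp only [hh, hx]
  have hkey : ∀ y : Y, h (g y) = i y := by
    intro y
    have hne := hfiber y
    have hπa : π (sel π (i y)) = i y := sel_spec hπc hne
    have hmem : ψ (sel π (i y)) ∈ Set.range θ := by rw [← hψr]; exact mem_range_self _
    obtain ⟨x, hx⟩ := hmem
    have hex : ∃ x : X, j x = (ψ (sel π (i y))).2 := ⟨x, by rw [← hx]⟩
    have hchoose : j hex.choose = (ψ (sel π (i y))).2 := hex.choose_spec
    have hgy : g y = hex.choose := by rw [hg]; simp only [hs']; rw [dif_pos hex]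
    have hxeq : hex.choose = x := hjinj (by rw [hchoose, ← hx])
    rw [hgy, hxeq]
    have h1 : h x = (θ x).1 := rfl
    rw [h1, hx]
    exact hπa
  have hsec : ∀ y, f (g y) = y := fun y => hiinj (hkey y)
  refine ⟨g, hsec, ?_⟩
  intro E hE
  -- measurability of `s'`
  have hs'm : Measurable s' := by
    intro t ht
    have hsnd : Measurable fun a : ℕ → ℕ => (ψ a).2 := (continuous_snd.comp hψc).measurable
    have heq : s' ⁻¹' t = ((fun a : ℕ → ℕ => (ψ a).2) ⁻¹' (j '' t)) ∪
        (((fun a : ℕ → ℕ => (ψ a).2) ⁻¹' (Set.range j))ᶜ ∩ (if x0 ∈ t then univ else ∅)) := by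
      ext a
      by_cases hx : ∃ x : X, j x = (ψ a).2
      · have hsa : s' a = hx.choose := by simp only [hs']; rw [dif_pos hx]
        have hrange : (ψ a).2 ∈ Set.range j := ⟨hx.choose, hx.choose_spec⟩
        simp only [mem_preimage, mem_union, mem_inter_iff, mem_compl_iff, hrange,
          not_true_eq_false, false_and, or_false, mem_singleton_iff]
        rw [hsa]
        constructor
        · intro hq; exact ⟨hx.choose, hq, hx.choose_spec⟩
        · rintro ⟨x', hx't, hjx'⟩
          have : x' = hx.choose := hjinj (by rw [hjx', hx.choose_spec])
          rwa [← this]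
      · have hsa : s' a = x0 := by simp only [hs']; rw [dif_neg hx]
        have hrange : (ψ a).2 ∉ Set.range j := fun ⟨x', hx'⟩ => hx ⟨x', hx'⟩
        have himg : (ψ a).2 ∉ j '' t := fun ⟨x', _, hx'⟩ => hx ⟨x', hx'⟩
        simp only [mem_preimage, mem_union, mem_inter_iff, mem_compl_iff, hrange, himg,
          not_false_eq_true, true_and, false_or]
        rw [hsa]
        by_cases hx0t : x0 ∈ t <;> simp [hx0t]
    rw [heq]
    refine MeasurableSet.union (hsnd (hjemb.measurableSet_image.2 ht)) ?_
    refine MeasurableSet.inter (hsnd hjemb.measurableSet_range).compl ?_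
    by_cases hx0t : x0 ∈ t <;> simp [hx0t]
  -- conclude by pulling back a generated-σ-algebra set through `i`
  have hW : MeasurableSet (s' ⁻¹' E) := hs'm hE
  have hS : MeasurableSet[MeasurableSpace.generateFrom
      {s : Set (ℕ → Bool) | AnalyticSet s}] (sel π ⁻¹' (s' ⁻¹' E)) :=
    sel_measurable hπc hW
  have hAM : AbsolutelyMeasurable (sel π ⁻¹' (s' ⁻¹' E)) :=
    absolutelyMeasurable_of_generateFrom_analytic hS
  have hgpre : g ⁻¹' E = i ⁻¹' (sel π ⁻¹' (s' ⁻¹' E)) := rfl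
  rw [hgpre]
  exact absolutelyMeasurable_preimage hi hAM
end

section
/- Bauer's theorem: Let K be a compact convex metrizable subset of a locally convex space, let x ∈ K be an extreme point, and let ν be a Borel probability measure on K whose barycenter is x (i.e., f(x) = ∫_K f dν for every continuous linear functional f, equivalently every continuous affine function). Then ν is the Dirac point mass δ_x. -/
open MeasureTheory

section Aux

open Set


set_option linter.unusedSectionVars false

variable {E : Type*} [AddCommGroup E] [Module ℝ E] [TopologicalSpace E]
    [IsTopologicalAddGroup E] [ContinuousSMul ℝ E] [T2Space E]
    [MeasurableSpace E] [BorelSpace E]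

lemma exists_barycenter_aux {K : Set E} (hK : IsCompact K)
    {C : Set E} (hCc : IsCompact C) (hCconv : Convex ℝ C)
    (μ : Measure K) [IsProbabilityMeasure μ]
    (hsupp : ∀ᵐ (y : K) ∂μ, (y : E) ∈ C) :
    ∃ b ∈ C, ∀ f : E →L[ℝ] ℝ, f b = ∫ y : K, f (y : E) ∂μ := by
  haveI : CompactSpace K := isCompact_iff_compactSpace.mp hK
  set Z : (E →L[ℝ] ℝ) → Set E := fun f => {y : E | f y = ∫ y : K, f (y : E) ∂μ} with hZ
  have hZc : ∀ f, IsClosed (Z f) := fun f => isClosed_eq f.continuous continuous_const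
  have hfin : ∀ u : Finset (E →L[ℝ] ℝ), (C ∩ ⋂ f ∈ u, Z f).Nonempty := by
    intro u
    classical
    set F : E →L[ℝ] (u → ℝ) := ContinuousLinearMap.pi (fun i => (i : E →L[ℝ] ℝ)) with hF
    set g : K → (u → ℝ) := fun y => F (y : E) with hg
    have hgc : Continuous g := F.continuous.comp continuous_subtype_val
    have hgi : Integrable g μ :=
      hgc.integrable_of_hasCompactSupport ((isClosed_tsupport g).isCompact)
    have hmem : (∫ y, g y ∂μ) ∈ F '' C := by
      refine Convex.integral_mem (hCconv.linear_image F.toLinearMap)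
        ((hCc.image F.continuous).isClosed) ?_ hgi
      filter_upwards [hsupp] with y hy
      exact mem_image_of_mem _ hy
    obtain ⟨b, hbC, hbv⟩ := hmem
    refine ⟨b, hbC, ?_⟩
    simp only [Set.mem_iInter]
    intro f hf
    have h1 : F b ⟨f, hf⟩ = (∫ y, g y ∂μ) ⟨f, hf⟩ := by rw [hbv]
    have h2 : (∫ y, g y ∂μ) ⟨f, hf⟩ = ∫ y, g y ⟨f, hf⟩ ∂μ := by
      have := (ContinuousLinearMap.proj (R := ℝ) (φ := fun _ : u => ℝ)
        ⟨f, hf⟩).integral_comp_comm hgi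
      simpa using this.symm
    have h3 : ∀ y : K, g y ⟨f, hf⟩ = f (y : E) := fun y => rfl
    show f b = _
    calc f b = F b ⟨f, hf⟩ := rfl
    _ = ∫ y, g y ⟨f, hf⟩ ∂μ := by rw [h1, h2]
    _ = ∫ y : K, f (y : E) ∂μ := by simp only [h3]
  obtain ⟨b, hbC, hb⟩ := hCc.inter_iInter_nonempty Z hZc hfin
  exact ⟨b, hbC, fun f => by have := Set.mem_iInter.mp hb f; exact this⟩

lemma key_null [LocallyConvexSpace ℝ E] {K : Set E} (hK : IsCompact K) (hKconv : Convex ℝ K)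
    {x : E} (hx : x ∈ Set.extremePoints ℝ K)
    (ν : Measure K) [IsProbabilityMeasure ν]
    (hbary : ∀ f : E →L[ℝ] ℝ, f x = ∫ y : K, f (y : E) ∂ν)
    {B : Set E} (hBc : IsCompact B) (hBconv : Convex ℝ B) (hBK : B ⊆ K) (hxB : x ∉ B) :
    ν (Subtype.val ⁻¹' B) = 0 := by
  haveI : CompactSpace K := isCompact_iff_compactSpace.mp hK
  by_contra h0
  set A : Set K := Subtype.val ⁻¹' B with hA
  have hAm : MeasurableSet A :=
    (hBc.isClosed.preimage continuous_subtype_val).measurableSet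
  set t : ENNReal := ν A with ht
  have ht1 : t ≤ 1 := prob_le_one
  have htne : t ≠ ⊤ := (lt_of_le_of_lt ht1 ENNReal.one_lt_top).ne
  -- integrability of functionals
  have hint : ∀ f : E →L[ℝ] ℝ, Integrable (fun y : K => f (y : E)) ν := by
    intro f
    exact (f.continuous.comp continuous_subtype_val).integrable_of_hasCompactSupport
      ((isClosed_tsupport _).isCompact)
  -- barycenter of the restriction to A
  set μ₁ : Measure K := t⁻¹ • ν.restrict A with hμ₁
  haveI : IsProbabilityMeasure μ₁ := by
    constructor
    rw [hμ₁, Measure.smul_apply, Measure.restrict_apply MeasurableSet.univ, Set.univ_inter,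
      smul_eq_mul, ← ht, ENNReal.inv_mul_cancel h0 htne]
  have hsupp₁ : ∀ᵐ (y : K) ∂μ₁, (y : E) ∈ B := by
    rw [hμ₁]
    refine Measure.ae_smul_measure ?_ _
    filter_upwards [ae_restrict_mem hAm] with y hy
    exact hy
  obtain ⟨b₁, hb₁B, hb₁⟩ := exists_barycenter_aux hK hBc hBconv μ₁ hsupp₁
  have htR : (t⁻¹).toReal = (t.toReal)⁻¹ := ENNReal.toReal_inv t
  have htRpos : 0 < t.toReal := ENNReal.toReal_pos h0 htne
  have hInt1 : ∀ f : E →L[ℝ] ℝ, ∫ y in A, f (y : E) ∂ν = t.toReal * f b₁ := by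
    intro f
    have := hb₁ f
    rw [hμ₁, integral_smul_measure, smul_eq_mul, htR] at this
    rw [this]
    field_simp
  by_cases ht1' : t = 1
  · -- full mass on B : x is the barycenter of μ₁, hence x ∈ B, contradiction
    have hcompl : ν Aᶜ = 0 := by
      have := measure_compl hAm (by finiteness)
      rw [measure_univ, ← ht, ht1'] at this
      simpa using this
    have hxb : ∀ f : E →L[ℝ] ℝ, f x = f b₁ := by
      intro f
      have hsplit := integral_add_compl hAm (hint f)
      have : ∫ y in Aᶜ, f (y : E) ∂ν = 0 := by
        rw [Measure.restrict_eq_zero.mpr hcompl, integral_zero_measure]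
      rw [this, add_zero] at hsplit
      rw [hbary f, ← hsplit, hInt1 f, ht1']
      simp
    have : x = b₁ := by
      by_contra hne
      obtain ⟨f, hf⟩ := SeparatingDual.exists_separating_of_ne (R := ℝ) hne
      exact hf (hxb f)
    exact hxB (this ▸ hb₁B)
  · -- split ν into the parts on A and Aᶜ
    set s : ENNReal := ν Aᶜ with hs
    have hts : t + s = 1 := by
      rw [ht, hs, measure_add_measure_compl hAm, measure_univ]
    have hs0 : s ≠ 0 := by
      intro h
      rw [h, add_zero] at hts
      exact ht1' hts
    have hsne : s ≠ ⊤ := (lt_of_le_of_lt prob_le_one ENNReal.one_lt_top).ne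
    set μ₂ : Measure K := s⁻¹ • ν.restrict Aᶜ with hμ₂
    haveI : IsProbabilityMeasure μ₂ := by
      constructor
      rw [hμ₂, Measure.smul_apply, Measure.restrict_apply MeasurableSet.univ, Set.univ_inter,
        smul_eq_mul, ← hs, ENNReal.inv_mul_cancel hs0 hsne]
    have hsupp₂ : ∀ᵐ (y : K) ∂μ₂, (y : E) ∈ K := Filter.Eventually.of_forall (fun y => y.2)
    obtain ⟨b₂, hb₂K, hb₂⟩ := exists_barycenter_aux hK hK hKconv μ₂ hsupp₂
    have hsR : (s⁻¹).toReal = (s.toReal)⁻¹ := ENNReal.toReal_inv s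
    have hsRpos : 0 < s.toReal := ENNReal.toReal_pos hs0 hsne
    have hInt2 : ∀ f : E →L[ℝ] ℝ, ∫ y in Aᶜ, f (y : E) ∂ν = s.toReal * f b₂ := by
      intro f
      have := hb₂ f
      rw [hμ₂, integral_smul_measure, smul_eq_mul, hsR] at this
      rw [this]
      field_simp
    have hsum : t.toReal + s.toReal = 1 := by
      rw [← ENNReal.toReal_add htne hsne, hts, ENNReal.toReal_one]
    have hcomb : ∀ f : E →L[ℝ] ℝ, f x = t.toReal * f b₁ + s.toReal * f b₂ := by
      intro f
      rw [hbary f, ← integral_add_compl hAm (hint f), hInt1 f, hInt2 f]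
    have hxeq : x = t.toReal • b₁ + s.toReal • b₂ := by
      by_contra hne
      obtain ⟨f, hf⟩ := SeparatingDual.exists_separating_of_ne (R := ℝ) hne
      apply hf
      rw [hcomb f]
      simp [map_add, _root_.map_smul, smul_eq_mul]
    have hseg : x ∈ openSegment ℝ b₁ b₂ :=
      ⟨t.toReal, s.toReal, htRpos, hsRpos, hsum, hxeq.symm⟩
    have := (hx.2 (hBK hb₁B) hb₂K hseg)
    exact hxB (this ▸ hb₁B)

end Aux

/-- Bauer's theorem: If `ν` is a Borel probability measure on a compact convex
metrizable subset `K` of a locally convex space whose barycenter is an extreme point `x` of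
`K`, then `ν` is the Dirac point mass at `x`. -/
theorem bauer_dirac_of_extreme_barycenter
    (E : Type*) [AddCommGroup E] [Module ℝ E] [TopologicalSpace E]
    [IsTopologicalAddGroup E] [ContinuousSMul ℝ E] [LocallyConvexSpace ℝ E]
    [TopologicalSpace.MetrizableSpace E]
    [MeasurableSpace E] [BorelSpace E]
    (K : Set E) (hKcomp : IsCompact K) (hKconv : Convex ℝ K)
    (x : E) (hx : x ∈ Set.extremePoints ℝ K)
    (ν : Measure K) [IsProbabilityMeasure ν]
    (hbary : ∀ f : E →L[ℝ] ℝ, f x = ∫ y : K, f (y : E) ∂ν) :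
    ν = Measure.dirac (⟨x, hx.1⟩ : K) := by
  haveI : CompactSpace K := isCompact_iff_compactSpace.mp hKcomp
  set p : K := (⟨x, hx.1⟩ : K) with hp
  have hnull : ν ({p}ᶜ) = 0 := by
    by_contra h0
    letI : MetricSpace K := TopologicalSpace.metrizableSpaceMetric K
    set S : ℕ → Set K := fun n => {y : K | 1 / (n + 1 : ℝ) ≤ dist y p} with hS
    have hSclosed : ∀ n, IsClosed (S n) :=
      fun n => isClosed_le continuous_const (continuous_id.dist continuous_const)
    have hSU : {p}ᶜ ⊆ ⋃ n, S n := by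
      intro y hy
      have hd : 0 < dist y p := dist_pos.mpr hy
      obtain ⟨n, hn⟩ := exists_nat_one_div_lt hd
      exact Set.mem_iUnion.mpr ⟨n, le_of_lt hn⟩
    have hex : ∃ n, ν (S n) ≠ 0 := by
      by_contra hall
      push_neg at hall
      exact h0 (measure_mono_null hSU (measure_iUnion_null hall))
    obtain ⟨n, hn⟩ := hex
    -- choose convex neighborhoods avoiding x
    have hchoice : ∀ y : K, ∃ V : Set E,
        y ∈ S n → V ∈ nhds (y : E) ∧ Convex ℝ V ∧ x ∉ closure V := by
      intro y
      by_cases hy : y ∈ S n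
      · have hyx : (y : E) ≠ x := by
          intro h
          have : y = p := Subtype.ext h
          have hd := hy
          rw [hS] at hd
          simp only [Set.mem_setOf_eq, this, dist_self] at hd
          have : (0:ℝ) < 1 / (n + 1 : ℝ) := by positivity
          linarith
        have hmem : ({x}ᶜ : Set E) ∈ nhds (y : E) :=
          isOpen_compl_singleton.mem_nhds (by simpa using hyx)
        obtain ⟨t, ht𝓝, htcl, hts⟩ := exists_mem_nhds_isClosed_subset hmem
        obtain ⟨V, ⟨hV𝓝, hVconv⟩, hVt⟩ :=
          (LocallyConvexSpace.convex_basis (𝕜 := ℝ) (y : E)).mem_iff.mp ht𝓝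
        refine ⟨V, fun _ => ⟨hV𝓝, hVconv, fun hxV => ?_⟩⟩
        have : closure V ⊆ t := htcl.closure_subset_iff.mpr hVt
        exact hts (this hxV) rfl
      · exact ⟨Set.univ, fun h => absurd h hy⟩
    choose V hV using hchoice
    set U : K → Set K := fun y => Subtype.val ⁻¹' (V y) with hU
    have hUn : ∀ y ∈ S n, U y ∈ nhds y := by
      intro y hy
      exact continuous_subtype_val.continuousAt.preimage_mem_nhds (hV y hy).1
    obtain ⟨τ, hτS, hτcov⟩ := ((hSclosed n).isCompact).elim_nhds_subcover U hUn
    have hsum : ν (S n) ≤ ∑ y ∈ τ, ν (U y) :=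
      le_trans (measure_mono hτcov) (measure_biUnion_finset_le τ U)
    have hexy : ∃ y ∈ τ, ν (U y) ≠ 0 := by
      by_contra hally
      push_neg at hally
      rw [Finset.sum_eq_zero (fun y hy => hally y hy)] at hsum
      exact hn (le_antisymm hsum zero_le)
    obtain ⟨y, hyτ, hy0⟩ := hexy
    have hyS : y ∈ S n := hτS y hyτ
    obtain ⟨hV𝓝, hVconv, hxV⟩ := hV y hyS
    set B : Set E := K ∩ closure (V y) with hB
    have hBc : IsCompact B := hKcomp.inter_right isClosed_closure
    have hBconv : Convex ℝ B := hKconv.inter hVconv.closure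
    have hBnull : ν (Subtype.val ⁻¹' B) = 0 :=
      key_null hKcomp hKconv hx ν hbary hBc hBconv Set.inter_subset_left
        (fun h => hxV h.2)
    apply hy0
    refine measure_mono_null ?_ hBnull
    intro z hz
    exact ⟨z.2, subset_closure hz⟩
  -- conclude that ν is the Dirac mass at p
  ext s hs
  rw [Measure.dirac_apply' _ hs]
  by_cases hps : p ∈ s
  · have hsc : ν sᶜ = 0 := by
      refine measure_mono_null (fun z hz => ?_) hnull
      simp only [Set.mem_compl_iff, Set.mem_singleton_iff]
      intro h
      exact hz (h ▸ hps)
    have : ν s = 1 := by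
      have := prob_compl_eq_one_sub (μ := ν) hs
      rw [hsc] at this
      have h1 : ν s ≤ 1 := prob_le_one
      rcases eq_or_lt_of_le h1 with h | h
      · exact h
      · exfalso
        rw [eq_comm, tsub_eq_zero_iff_le] at this
        exact absurd (le_antisymm h1 this) h.ne
    rw [this, Set.indicator_of_mem hps]
    rfl
  · have : ν s = 0 := by
      refine measure_mono_null (fun z hz => ?_) hnull
      simp only [Set.mem_compl_iff, Set.mem_singleton_iff]
      intro h
      exact hps (h ▸ hz)
    rw [this, Set.indicator_of_notMem hps]
end
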